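/- arXiv:math/0305136 — 4 statements merged into one kernel-verified Lean document; each statement's English description precedes it below -/
import Mathlib

section
/- The Fourier transformation F : C²(ι×ῑ, ι×ῑ) → C²(ῑ×ι, ῑ×ι) is an anti-multiplicative bijection from vertical composition to convolution, and multiplicative from convolution to vertical composition: F(a₁ ∘ a₂) = F(a₂) ∗ F(a₁) and F(a₁ ∗ a₂) = F(a₁) ∘ F(a₂). -/
open CategoryTheory Bicategory

universe w v u

variable {C : Type u} [Bicategory.{w, v} C] {a b : C}

/-- Duality data exhibiting `κ` as a two-sided dual of `ι`: `(evL, coevL)` exhibit a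
left-dual pair and `(evR, coevR)` a right-dual pair, all four snake identities holding. -/
structure FrobeniusDuality (ι : a ⟶ b) (κ : b ⟶ a) where
  evL : κ ≫ ι ⟶ 𝟙 b
  coevL : 𝟙 a ⟶ ι ≫ κ
  evR : ι ≫ κ ⟶ 𝟙 a
  coevR : 𝟙 b ⟶ κ ≫ ι
  zig1 : (λ_ ι).inv ≫ coevL ▷ ι ≫ (α_ ι κ ι).hom ≫ ι ◁ evL ≫ (ρ_ ι).hom = 𝟙 ι
  zig2 : (ρ_ κ).inv ≫ κ ◁ coevL ≫ (α_ κ ι κ).inv ≫ evL ▷ κ ≫ (λ_ κ).hom = 𝟙 κ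
  zig3 : (ρ_ ι).inv ≫ ι ◁ coevR ≫ (α_ ι κ ι).inv ≫ evR ▷ ι ≫ (λ_ ι).hom = 𝟙 ι
  zig4 : (λ_ κ).inv ≫ coevR ▷ κ ≫ (α_ κ ι κ).hom ≫ κ ◁ evR ≫ (ρ_ κ).hom = 𝟙 κ

namespace FrobeniusDuality

variable {ι : a ⟶ b} {κ : b ⟶ a} (D : FrobeniusDuality ι κ)

/-- The Fourier transformation `F`, bending the legs of a 2-endomorphism of `ι ≫ κ`
using `coevR` and `evL`. -/
def Ftr (x : ι ≫ κ ⟶ ι ≫ κ) : κ ≫ ι ⟶ κ ≫ ι :=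
  (λ_ (κ ≫ ι)).inv ≫ D.coevR ▷ (κ ≫ ι) ≫ (α_ κ ι (κ ≫ ι)).hom ≫
    κ ◁ ((α_ ι κ ι).inv ≫ x ▷ ι ≫ (α_ ι κ ι).hom) ≫
    (α_ κ ι (κ ≫ ι)).inv ≫ (κ ≫ ι) ◁ D.evL ≫ (ρ_ (κ ≫ ι)).hom

/-- The inverse Fourier transformation, bending legs using `coevL` and `evR`. -/
def FtrInv (y : κ ≫ ι ⟶ κ ≫ ι) : ι ≫ κ ⟶ ι ≫ κ :=
  (ρ_ (ι ≫ κ)).inv ≫ (ι ≫ κ) ◁ D.coevL ≫ (α_ ι κ (ι ≫ κ)).hom ≫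
    ι ◁ ((α_ κ ι κ).inv ≫ y ▷ κ ≫ (α_ κ ι κ).hom) ≫
    (α_ ι κ (ι ≫ κ)).inv ≫ D.evR ▷ (ι ≫ κ) ≫ (λ_ (ι ≫ κ)).hom

/-- The second Fourier transformation `Ḟ`, with `coevR` and `evL` attached on the other sides. -/
def Fdot (x : ι ≫ κ ⟶ ι ≫ κ) : κ ≫ ι ⟶ κ ≫ ι :=
  (ρ_ (κ ≫ ι)).inv ≫ (κ ≫ ι) ◁ D.coevR ≫ (α_ κ ι (κ ≫ ι)).hom ≫
    κ ◁ ((α_ ι κ ι).inv ≫ x ▷ ι ≫ (α_ ι κ ι).hom) ≫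
    (α_ κ ι (κ ≫ ι)).inv ≫ D.evL ▷ (κ ≫ ι) ≫ (λ_ (κ ≫ ι)).hom

/-- The inverse of the second Fourier transformation. -/
def FdotInv (y : κ ≫ ι ⟶ κ ≫ ι) : ι ≫ κ ⟶ ι ≫ κ :=
  (λ_ (ι ≫ κ)).inv ≫ D.coevL ▷ (ι ≫ κ) ≫ (α_ ι κ (ι ≫ κ)).hom ≫
    ι ◁ ((α_ κ ι κ).inv ≫ y ▷ κ ≫ (α_ κ ι κ).hom) ≫
    (α_ ι κ (ι ≫ κ)).inv ≫ (ι ≫ κ) ◁ D.evR ≫ (ρ_ (ι ≫ κ)).hom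

/-- The convolution product on `C²(ι×κ, ι×κ)`, contracting the middle legs with
`coevR` and `evL`.  (Vertical composition in the paper is `x ∘ y = y ≫ x`.) -/
def conv (x y : ι ≫ κ ⟶ ι ≫ κ) : ι ≫ κ ⟶ ι ≫ κ :=
  ι ◁ (λ_ κ).inv ≫ ι ◁ (D.coevR ▷ κ) ≫ ι ◁ (α_ κ ι κ).hom ≫
    (α_ ι κ (ι ≫ κ)).inv ≫ x ▷ (ι ≫ κ) ≫ (ι ≫ κ) ◁ y ≫
    (α_ ι κ (ι ≫ κ)).hom ≫ ι ◁ (α_ κ ι κ).inv ≫ ι ◁ (D.evL ▷ κ) ≫ ι ◁ (λ_ κ).hom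

/-- The convolution product on `C²(κ×ι, κ×ι)`, contracting the middle legs with
`coevL` and `evR`. -/
def convB (x y : κ ≫ ι ⟶ κ ≫ ι) : κ ≫ ι ⟶ κ ≫ ι :=
  κ ◁ (λ_ ι).inv ≫ κ ◁ (D.coevL ▷ ι) ≫ κ ◁ (α_ ι κ ι).hom ≫
    (α_ κ ι (κ ≫ ι)).inv ≫ x ▷ (κ ≫ ι) ≫ (κ ≫ ι) ◁ y ≫
    (α_ κ ι (κ ≫ ι)).hom ≫ κ ◁ (α_ ι κ ι).inv ≫ κ ◁ (D.evR ▷ ι) ≫ κ ◁ (λ_ ι).hom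

/-- The convolution unit `i_A = coev_L ∘ ev_R`. -/
def iA : ι ≫ κ ⟶ ι ≫ κ := D.evR ≫ D.coevL

/-- The convolution unit `i_B = coev_R ∘ ev_L`. -/
def iB : κ ≫ ι ⟶ κ ≫ ι := D.evL ≫ D.coevR

/-- The antipode `S_A = Ḟ⁻¹ ∘ F`. -/
def SA (x : ι ≫ κ ⟶ ι ≫ κ) : ι ≫ κ ⟶ ι ≫ κ := D.FdotInv (D.Ftr x)

/-- The inverse antipode `S_A⁻¹ = F⁻¹ ∘ Ḟ`. -/
def SAinv (x : ι ≫ κ ⟶ ι ≫ κ) : ι ≫ κ ⟶ ι ≫ κ := D.FtrInv (D.Fdot x)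

/-- The anti-isomorphism `ν : L → R^op` (conjugation with `evR`/`coevR`). -/
def nu (l : ι ⟶ ι) : κ ⟶ κ :=
  (λ_ κ).inv ≫ D.coevR ▷ κ ≫ (α_ κ ι κ).hom ≫ κ ◁ (l ▷ κ) ≫ κ ◁ D.evR ≫ (ρ_ κ).hom

/-- The anti-isomorphism `μ : L → R^op` (conjugation with `evL`/`coevL`). -/
def mu (l : ι ⟶ ι) : κ ⟶ κ :=
  (ρ_ κ).inv ≫ κ ◁ D.coevL ≫ (α_ κ ι κ).inv ≫ (κ ◁ l) ▷ κ ≫ D.evL ▷ κ ≫ (λ_ κ).hom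

/-- The Frobenius map `φ_L : A → L`. -/
def phiL (x : ι ≫ κ ⟶ ι ≫ κ) : ι ⟶ ι :=
  (ρ_ ι).inv ≫ ι ◁ D.coevR ≫ (α_ ι κ ι).inv ≫ x ▷ ι ≫ (α_ ι κ ι).hom ≫ ι ◁ D.evL ≫ (ρ_ ι).hom

/-- Source map of the left bialgebroid `s_L : L → A`, `l ↦ l × κ`. -/
def sL (l : ι ⟶ ι) : ι ≫ κ ⟶ ι ≫ κ := l ▷ κ

/-- Target map of the left bialgebroid `t_L : L → A`, `l ↦ ι × μ(l)`. -/
def tL (l : ι ⟶ ι) : ι ≫ κ ⟶ ι ≫ κ := ι ◁ D.mu l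

/-- Source map of the right bialgebroid `s_R : R → A`, `r ↦ ι × r`. -/
def sR (r : κ ⟶ κ) : ι ≫ κ ⟶ ι ≫ κ := ι ◁ r

/-- Target map of the right bialgebroid `t_R : R → A`, `r ↦ ν⁻¹(r) × κ`. -/
noncomputable def tR (r : κ ⟶ κ) : ι ≫ κ ⟶ ι ≫ κ :=
  (@Function.invFun (ι ⟶ ι) (κ ⟶ κ) ⟨𝟙 ι⟩ D.nu r) ▷ κ

/-- The counit `π_L(a) = φ_L(a ∘ i_A)`. -/
def piL (x : ι ≫ κ ⟶ ι ≫ κ) : ι ⟶ ι := D.phiL (D.iA ≫ x)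

/-- The counit `π_R(a) = ν(φ_L(S_A⁻¹(a) ∘ i_A))`. -/
def piR (x : ι ≫ κ ⟶ ι ≫ κ) : κ ⟶ κ := D.nu (D.phiL (D.iA ≫ D.SAinv x))

/-- The composite `(y × ι) ∘ α⁻¹ ∘ (ι × coevR) ∘ (ι × evL) ∘ α ∘ (x × ι)` appearing in
the depth-2 quasi-basis identity. -/
def d2comp (x y : ι ≫ κ ⟶ ι ≫ κ) : (ι ≫ κ) ≫ ι ⟶ (ι ≫ κ) ≫ ι :=
  x ▷ ι ≫ (α_ ι κ ι).hom ≫ ι ◁ D.evL ≫ ι ◁ D.coevR ≫ (α_ ι κ ι).inv ≫ y ▷ ι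

end FrobeniusDuality

namespace FrobeniusDuality

variable {ι : a ⟶ b} {κ : b ⟶ a} (D : FrobeniusDuality ι κ)

lemma ftrInv_ftr (x : ι ≫ κ ⟶ ι ≫ κ) : D.FtrInv (D.Ftr x) = x := by
  dsimp only [Ftr, FtrInv]
  calc
    _ = 𝟙 (ι ≫ κ) ⊗≫ (ι ≫ κ) ◁ D.coevL ⊗≫ (ι ◁ D.coevR) ▷ ((κ ≫ ι) ≫ κ) ⊗≫
        (ι ≫ κ) ◁ (x ▷ (ι ≫ κ)) ⊗≫
        ((ι ≫ κ) ◁ (ι ◁ (D.evL ▷ κ)) ≫ D.evR ▷ (ι ≫ 𝟙 b ≫ κ)) ⊗≫ 𝟙 (ι ≫ κ) := by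
      bicategory
    _ = 𝟙 (ι ≫ κ) ⊗≫ (ι ≫ κ) ◁ D.coevL ⊗≫ (ι ◁ D.coevR) ▷ ((κ ≫ ι) ≫ κ) ⊗≫
        ((ι ≫ κ) ◁ (x ▷ (ι ≫ κ)) ≫ D.evR ▷ ((ι ≫ κ) ≫ ι ≫ κ)) ⊗≫
        ι ◁ (D.evL ▷ κ) ⊗≫ 𝟙 (ι ≫ κ) := by
      conv_lhs => rw [whisker_exchange]
      bicategory
    _ = 𝟙 (ι ≫ κ) ⊗≫ (ι ≫ κ) ◁ D.coevL ⊗≫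
        ((ρ_ ι).inv ≫ ι ◁ D.coevR ≫ (α_ ι κ ι).inv ≫ D.evR ▷ ι ≫ (λ_ ι).hom) ▷ (κ ≫ ι ≫ κ) ⊗≫
        x ▷ (ι ≫ κ) ⊗≫ ι ◁ (D.evL ▷ κ) ⊗≫ 𝟙 (ι ≫ κ) := by
      conv_lhs => rw [whisker_exchange]
      bicategory
    _ = 𝟙 (ι ≫ κ) ⊗≫ ((ι ≫ κ) ◁ D.coevL ≫ x ▷ (ι ≫ κ)) ⊗≫ ι ◁ (D.evL ▷ κ) ⊗≫ 𝟙 (ι ≫ κ) := by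
      rw [D.zig3]
      bicategory
    _ = 𝟙 (ι ≫ κ) ⊗≫ x ▷ 𝟙 a ⊗≫
        ι ◁ ((ρ_ κ).inv ≫ κ ◁ D.coevL ≫ (α_ κ ι κ).inv ≫ D.evL ▷ κ ≫ (λ_ κ).hom) ⊗≫
        𝟙 (ι ≫ κ) := by
      conv_lhs => rw [whisker_exchange]
      bicategory
    _ = x := by
      rw [D.zig2]
      bicategory
lemma ftr_ftrInv (y : κ ≫ ι ⟶ κ ≫ ι) : D.Ftr (D.FtrInv y) = y := by
  dsimp only [Ftr, FtrInv]
  calc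
    _ = 𝟙 (κ ≫ ι) ⊗≫
        (D.coevR ▷ (κ ≫ 𝟙 a ≫ ι) ≫ (κ ≫ ι) ◁ (κ ◁ (D.coevL ▷ ι))) ⊗≫
        (κ ≫ ι) ◁ (y ▷ (κ ≫ ι)) ⊗≫ κ ◁ (D.evR ▷ (ι ≫ κ ≫ ι)) ⊗≫
        (κ ≫ ι) ◁ D.evL ⊗≫ 𝟙 (κ ≫ ι) := by
      bicategory
    _ = 𝟙 (κ ≫ ι) ⊗≫ κ ◁ (D.coevL ▷ ι) ⊗≫
        (D.coevR ▷ ((κ ≫ ι) ≫ κ ≫ ι) ≫ (κ ≫ ι) ◁ (y ▷ (κ ≫ ι))) ⊗≫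
        κ ◁ (D.evR ▷ (ι ≫ κ ≫ ι)) ⊗≫ (κ ≫ ι) ◁ D.evL ⊗≫ 𝟙 (κ ≫ ι) := by
      conv_lhs => rw [← whisker_exchange]
      bicategory
    _ = 𝟙 (κ ≫ ι) ⊗≫ κ ◁ (D.coevL ▷ ι) ⊗≫ y ▷ (κ ≫ ι) ⊗≫
        D.coevR ▷ ((κ ≫ ι) ≫ κ ≫ ι) ⊗≫
        ((κ ◁ D.evR) ▷ (ι ≫ κ ≫ ι) ≫ (κ ≫ 𝟙 a) ◁ (ι ◁ D.evL)) ⊗≫ 𝟙 (κ ≫ ι) := by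
      conv_lhs => rw [← whisker_exchange]
      bicategory
    _ = 𝟙 (κ ≫ ι) ⊗≫ κ ◁ (D.coevL ▷ ι) ⊗≫ y ▷ (κ ≫ ι) ⊗≫
        (D.coevR ▷ ((κ ≫ ι) ≫ κ ≫ ι) ≫ (κ ≫ ι) ◁ ((κ ≫ ι) ◁ D.evL)) ⊗≫
        (κ ◁ D.evR) ▷ ι ⊗≫ 𝟙 (κ ≫ ι) := by
      conv_lhs => rw [← whisker_exchange]
      bicategory
    _ = 𝟙 (κ ≫ ι) ⊗≫ κ ◁ (D.coevL ▷ ι) ⊗≫ (y ▷ (κ ≫ ι) ≫ (κ ≫ ι) ◁ D.evL) ⊗≫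
        ((λ_ κ).inv ≫ D.coevR ▷ κ ≫ (α_ κ ι κ).hom ≫ κ ◁ D.evR ≫ (ρ_ κ).hom) ▷ ι ⊗≫
        𝟙 (κ ≫ ι) := by
      conv_lhs => rw [← whisker_exchange]
      bicategory
    _ = 𝟙 (κ ≫ ι) ⊗≫ κ ◁ ((λ_ ι).inv ≫ D.coevL ▷ ι ≫ (α_ ι κ ι).hom ≫ ι ◁ D.evL ≫ (ρ_ ι).hom) ⊗≫
        y ⊗≫
        ((λ_ κ).inv ≫ D.coevR ▷ κ ≫ (α_ κ ι κ).hom ≫ κ ◁ D.evR ≫ (ρ_ κ).hom) ▷ ι ⊗≫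
        𝟙 (κ ≫ ι) := by
      conv_lhs => rw [← whisker_exchange]
      bicategory
    _ = y := by
      rw [D.zig1, D.zig4]
      bicategory
lemma ftr_comp (a₁ a₂ : ι ≫ κ ⟶ ι ≫ κ) :
    D.Ftr (a₂ ≫ a₁) = D.convB (D.Ftr a₂) (D.Ftr a₁) := by
  symm
  dsimp only [Ftr, convB]
  calc
    _ = 𝟙 (κ ≫ ι) ⊗≫
        (𝟙 b ◁ (κ ◁ (D.coevL ▷ ι)) ≫ D.coevR ▷ (κ ≫ (ι ≫ κ) ≫ ι)) ⊗≫
        κ ◁ (a₂ ▷ (ι ≫ κ ≫ ι)) ⊗≫ (κ ≫ ι) ◁ (D.evL ▷ (κ ≫ ι)) ⊗≫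
        (κ ≫ ι) ◁ (D.coevR ▷ (κ ≫ ι)) ⊗≫ (κ ≫ ι ≫ κ) ◁ (a₁ ▷ ι) ⊗≫
        (κ ≫ ι ≫ κ ≫ ι) ◁ D.evL ⊗≫ κ ◁ (D.evR ▷ ι) ⊗≫ 𝟙 (κ ≫ ι) := by
      bicategory
    _ = 𝟙 (κ ≫ ι) ⊗≫ D.coevR ▷ (κ ≫ ι) ⊗≫
        ((κ ≫ ι ≫ κ) ◁ (D.coevL ▷ ι) ≫ (κ ◁ a₂) ▷ ((ι ≫ κ) ≫ ι)) ⊗≫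
        (κ ≫ ι) ◁ (D.evL ▷ (κ ≫ ι)) ⊗≫
        (κ ≫ ι) ◁ (D.coevR ▷ (κ ≫ ι)) ⊗≫ (κ ≫ ι ≫ κ) ◁ (a₁ ▷ ι) ⊗≫
        (κ ≫ ι ≫ κ ≫ ι) ◁ D.evL ⊗≫ κ ◁ (D.evR ▷ ι) ⊗≫ 𝟙 (κ ≫ ι) := by
      conv_lhs => rw [whisker_exchange]
      bicategory
    _ = 𝟙 (κ ≫ ι) ⊗≫ D.coevR ▷ (κ ≫ ι) ⊗≫ κ ◁ (a₂ ▷ ι) ⊗≫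
        (κ ≫ ι) ◁ (((ρ_ κ).inv ≫ κ ◁ D.coevL ≫ (α_ κ ι κ).inv ≫ D.evL ▷ κ ≫ (λ_ κ).hom) ▷ ι) ⊗≫
        (κ ≫ ι) ◁ (D.coevR ▷ (κ ≫ ι)) ⊗≫ (κ ≫ ι ≫ κ) ◁ (a₁ ▷ ι) ⊗≫
        (κ ≫ ι ≫ κ ≫ ι) ◁ D.evL ⊗≫ κ ◁ (D.evR ▷ ι) ⊗≫ 𝟙 (κ ≫ ι) := by
      conv_lhs => rw [whisker_exchange]
      bicategory
    _ = 𝟙 (κ ≫ ι) ⊗≫ D.coevR ▷ (κ ≫ ι) ⊗≫ κ ◁ (a₂ ▷ ι) ⊗≫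
        (κ ≫ ι) ◁ (D.coevR ▷ (κ ≫ ι)) ⊗≫ (κ ≫ ι ≫ κ) ◁ (a₁ ▷ ι) ⊗≫
        ((κ ≫ ι ≫ κ) ◁ (ι ◁ D.evL) ≫ (κ ◁ D.evR) ▷ (ι ≫ 𝟙 b)) ⊗≫ 𝟙 (κ ≫ ι) := by
      rw [D.zig2]
      bicategory
    _ = 𝟙 (κ ≫ ι) ⊗≫ D.coevR ▷ (κ ≫ ι) ⊗≫ κ ◁ (a₂ ▷ ι) ⊗≫
        (κ ≫ ι) ◁ (D.coevR ▷ (κ ≫ ι)) ⊗≫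
        ((κ ≫ ι ≫ κ) ◁ (a₁ ▷ ι) ≫ (κ ◁ D.evR) ▷ ((ι ≫ κ) ≫ ι)) ⊗≫
        (κ ≫ ι) ◁ D.evL ⊗≫ 𝟙 (κ ≫ ι) := by
      conv_lhs => rw [whisker_exchange]
      bicategory
    _ = 𝟙 (κ ≫ ι) ⊗≫ D.coevR ▷ (κ ≫ ι) ⊗≫ κ ◁ (a₂ ▷ ι) ⊗≫
        κ ◁ (((ρ_ ι).inv ≫ ι ◁ D.coevR ≫ (α_ ι κ ι).inv ≫ D.evR ▷ ι ≫ (λ_ ι).hom) ▷ (κ ≫ ι)) ⊗≫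
        κ ◁ (a₁ ▷ ι) ⊗≫ (κ ≫ ι) ◁ D.evL ⊗≫ 𝟙 (κ ≫ ι) := by
      conv_lhs => rw [whisker_exchange]
      bicategory
    _ = _ := by
      rw [D.zig3]
      bicategory
lemma ftr_conv (a₁ a₂ : ι ≫ κ ⟶ ι ≫ κ) :
    D.Ftr (D.conv a₁ a₂) = D.Ftr a₂ ≫ D.Ftr a₁ := by
  dsimp only [Ftr, conv]
  calc
    _ = 𝟙 (κ ≫ ι) ⊗≫ D.coevR ▷ (κ ≫ ι) ⊗≫ (κ ≫ ι) ◁ (D.coevR ▷ (κ ≫ ι)) ⊗≫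
        ((κ ◁ a₁) ▷ ((ι ≫ κ) ≫ ι) ≫ (κ ≫ ι ≫ κ) ◁ (a₂ ▷ ι)) ⊗≫
        (κ ≫ ι) ◁ (D.evL ▷ (κ ≫ ι)) ⊗≫ (κ ≫ ι) ◁ D.evL ⊗≫ 𝟙 (κ ≫ ι) := by
      bicategory
    _ = 𝟙 (κ ≫ ι) ⊗≫
        (D.coevR ▷ (𝟙 b ≫ κ ≫ ι) ≫ (κ ≫ ι) ◁ (D.coevR ▷ (κ ≫ ι))) ⊗≫
        (κ ≫ ι ≫ κ) ◁ (a₂ ▷ ι) ⊗≫ κ ◁ (a₁ ▷ (ι ≫ κ ≫ ι)) ⊗≫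
        (κ ≫ ι) ◁ (D.evL ▷ (κ ≫ ι)) ⊗≫ (κ ≫ ι) ◁ D.evL ⊗≫ 𝟙 (κ ≫ ι) := by
      conv_lhs => rw [← whisker_exchange]
      bicategory
    _ = 𝟙 (κ ≫ ι) ⊗≫ D.coevR ▷ (κ ≫ ι) ⊗≫
        (D.coevR ▷ (κ ≫ (ι ≫ κ) ≫ ι) ≫ (κ ≫ ι) ◁ (κ ◁ (a₂ ▷ ι))) ⊗≫
        κ ◁ (a₁ ▷ (ι ≫ κ ≫ ι)) ⊗≫
        (κ ≫ ι) ◁ (D.evL ▷ (κ ≫ ι)) ⊗≫ (κ ≫ ι) ◁ D.evL ⊗≫ 𝟙 (κ ≫ ι) := by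
      conv_lhs => rw [← whisker_exchange]
      bicategory
    _ = 𝟙 (κ ≫ ι) ⊗≫ D.coevR ▷ (κ ≫ ι) ⊗≫ κ ◁ (a₂ ▷ ι) ⊗≫
        D.coevR ▷ (κ ≫ ι ≫ κ ≫ ι) ⊗≫ κ ◁ (a₁ ▷ (ι ≫ κ ≫ ι)) ⊗≫
        (((κ ≫ ι) ◁ D.evL) ▷ (κ ≫ ι) ≫ ((κ ≫ ι) ≫ 𝟙 b) ◁ D.evL) ⊗≫ 𝟙 (κ ≫ ι) := by
      conv_lhs => rw [← whisker_exchange]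
      bicategory
    _ = 𝟙 (κ ≫ ι) ⊗≫ D.coevR ▷ (κ ≫ ι) ⊗≫ κ ◁ (a₂ ▷ ι) ⊗≫
        D.coevR ▷ (κ ≫ ι ≫ κ ≫ ι) ⊗≫
        ((κ ◁ a₁) ▷ (ι ≫ κ ≫ ι) ≫ (κ ≫ ι ≫ κ) ◁ (ι ◁ D.evL)) ⊗≫
        (κ ≫ ι) ◁ D.evL ⊗≫ 𝟙 (κ ≫ ι) := by
      conv_lhs => rw [← whisker_exchange]
      bicategory
    _ = 𝟙 (κ ≫ ι) ⊗≫ D.coevR ▷ (κ ≫ ι) ⊗≫ κ ◁ (a₂ ▷ ι) ⊗≫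
        (D.coevR ▷ ((κ ≫ ι) ≫ κ ≫ ι) ≫ (κ ≫ ι) ◁ ((κ ≫ ι) ◁ D.evL)) ⊗≫
        κ ◁ (a₁ ▷ ι) ⊗≫ (κ ≫ ι) ◁ D.evL ⊗≫ 𝟙 (κ ≫ ι) := by
      conv_lhs => rw [← whisker_exchange]
      bicategory
    _ = _ := by
      conv_lhs => rw [← whisker_exchange]
      bicategory

end FrobeniusDuality


open FrobeniusDuality in
/-- The Fourier transformation `F : C²(ι×κ,ι×κ) → C²(κ×ι,κ×ι)` is a
bijection which is anti-multiplicative from vertical composition to convolution, and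
multiplicative from convolution to vertical composition:
`F(a₁ ∘ a₂) = F(a₂) ∗ F(a₁)` and `F(a₁ ∗ a₂) = F(a₁) ∘ F(a₂)`.
(Vertical composition `x ∘ y` of the paper is `y ≫ x` here.) -/
theorem fourier_transform_multiplicativity
    {C : Type u} [Bicategory.{w, v} C] [∀ (x y : C), Preadditive (x ⟶ y)]
    {a b : C} {ι : a ⟶ b} {κ : b ⟶ a} (D : FrobeniusDuality ι κ) :
    Function.Bijective D.Ftr ∧
      (∀ a₁ a₂ : ι ≫ κ ⟶ ι ≫ κ, D.Ftr (a₂ ≫ a₁) = D.convB (D.Ftr a₂) (D.Ftr a₁)) ∧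
      (∀ a₁ a₂ : ι ≫ κ ⟶ ι ≫ κ, D.Ftr (D.conv a₁ a₂) = D.Ftr a₂ ≫ D.Ftr a₁) := by

  exact ⟨Function.bijective_iff_has_inverse.mpr ⟨D.FtrInv, D.ftrInv_ftr, D.ftr_ftrInv⟩,
    D.ftr_comp, D.ftr_conv⟩
end

section
/- Let ι be a Frobenius 1-morphism in an additive bicategory. Then ι satisfies the left depth-2 condition (i.e., (ι×ῑ)×ι is a direct summand of a finite direct sum of copies of ι) if and only if there exists a finite family (yᵢ, xᵢ) of 2-endomorphisms of ι×ῑ such that ∑ᵢ (yᵢ × ι) ∘ (ι × coev_R) ∘ (ι × ev_L) ∘ (xᵢ × ι) = id_{(ι×ῑ)×ι} (with appropriate associators). -/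
open CategoryTheory Bicategory

universe w v u

variable {C : Type u} [Bicategory.{w, v} C] {a b : C}

section Aux

variable {ι : a ⟶ b} {κ : b ⟶ a}

private lemma bendA (evL : κ ≫ ι ⟶ 𝟙 b) (coevL : 𝟙 a ⟶ ι ≫ κ)
    (hz1 : (λ_ ι).inv ≫ coevL ▷ ι ≫ (α_ ι κ ι).hom ≫ ι ◁ evL ≫ (ρ_ ι).hom = 𝟙 ι)
    (β : (ι ≫ κ) ≫ ι ⟶ ι) :
    ((ρ_ (ι ≫ κ)).inv ≫ (ι ≫ κ) ◁ coevL ≫ (α_ (ι ≫ κ) ι κ).inv ≫ β ▷ κ) ▷ ι ≫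
      (α_ ι κ ι).hom ≫ ι ◁ evL ≫ (ρ_ ι).hom = β := by
  have key : (ρ_ (ι ≫ κ)).inv ▷ ι ≫ ((ι ≫ κ) ◁ coevL) ▷ ι ≫ (α_ (ι ≫ κ) ι κ).inv ▷ ι ≫
      (α_ ((ι ≫ κ) ≫ ι) κ ι).hom ≫ ((ι ≫ κ) ≫ ι) ◁ evL ≫ (ρ_ ((ι ≫ κ) ≫ ι)).hom
      = 𝟙 ((ι ≫ κ) ≫ ι) := by
    calc _ = (ι ≫ κ) ◁ ((λ_ ι).inv ≫ coevL ▷ ι ≫ (α_ ι κ ι).hom ≫ ι ◁ evL ≫ (ρ_ ι).hom) := by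
          bicategory
      _ = 𝟙 _ := by rw [hz1, Bicategory.whiskerLeft_id]
  simp only [comp_whiskerRight, Category.assoc, associator_naturality_left_assoc,
    ← whisker_exchange_assoc, rightUnitor_naturality]
  slice_lhs 1 6 => rw [key]
  simp

private lemma bendB (evR : ι ≫ κ ⟶ 𝟙 a) (coevR : 𝟙 b ⟶ κ ≫ ι)
    (hz3 : (ρ_ ι).inv ≫ ι ◁ coevR ≫ (α_ ι κ ι).inv ≫ evR ▷ ι ≫ (λ_ ι).hom = 𝟙 ι)
    (β' : ι ⟶ (ι ≫ κ) ≫ ι) :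
    (ρ_ ι).inv ≫ ι ◁ coevR ≫ (α_ ι κ ι).inv ≫
      (β' ▷ κ ≫ (α_ (ι ≫ κ) ι κ).hom ≫ (ι ≫ κ) ◁ evR ≫ (ρ_ (ι ≫ κ)).hom) ▷ ι = β' := by
  have key : (ρ_ ((ι ≫ κ) ≫ ι)).inv ≫ ((ι ≫ κ) ≫ ι) ◁ coevR ≫ (α_ ((ι ≫ κ) ≫ ι) κ ι).inv ≫
      (α_ (ι ≫ κ) ι κ).hom ▷ ι ≫ ((ι ≫ κ) ◁ evR) ▷ ι ≫ (ρ_ (ι ≫ κ)).hom ▷ ι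
      = 𝟙 ((ι ≫ κ) ≫ ι) := by
    calc _ = (ι ≫ κ) ◁ ((ρ_ ι).inv ≫ ι ◁ coevR ≫ (α_ ι κ ι).inv ≫ evR ▷ ι ≫ (λ_ ι).hom) := by
          bicategory
      _ = 𝟙 _ := by rw [hz3, Bicategory.whiskerLeft_id]
  simp only [comp_whiskerRight, Category.assoc]
  rw [← associator_inv_naturality_left_assoc, whisker_exchange_assoc,
    ← rightUnitor_inv_naturality_assoc, key, Category.comp_id]

private lemma d2comp_split (D : FrobeniusDuality ι κ) (x y : ι ≫ κ ⟶ ι ≫ κ) :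
    D.d2comp x y = (x ▷ ι ≫ (α_ ι κ ι).hom ≫ ι ◁ D.evL ≫ (ρ_ ι).hom) ≫
      ((ρ_ ι).inv ≫ ι ◁ D.coevR ≫ (α_ ι κ ι).inv ≫ y ▷ ι) := by
  simp [FrobeniusDuality.d2comp]

end Aux

open FrobeniusDuality in
/-- A Frobenius 1-morphism `ι` in an additive bicategory satisfies the left
depth-2 condition — `(ι×κ)×ι` is a direct summand of a finite direct sum of copies of `ι` —
iff there is a finite family `(yᵢ, xᵢ)` of 2-endomorphisms of `ι×κ` with
`∑ᵢ (yᵢ × ι) ∘ (ι × coevR) ∘ (ι × evL) ∘ (xᵢ × ι) = id` (with appropriate associators). -/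
theorem left_depth_two_iff_quasi_basis
    {C : Type u} [Bicategory.{w, v} C] [∀ (x y : C), Preadditive (x ⟶ y)]
    (wl : ∀ {x y z : C} (f : x ⟶ y) {g h : y ⟶ z} (η θ : g ⟶ h),
      f ◁ (η + θ) = f ◁ η + f ◁ θ)
    (wr : ∀ {x y z : C} {f g : x ⟶ y} (η θ : f ⟶ g) (h : y ⟶ z),
      (η + θ) ▷ h = η ▷ h + θ ▷ h)
    {a b : C} {ι : a ⟶ b} {κ : b ⟶ a} (D : FrobeniusDuality ι κ) :
    (∃ (n : ℕ) (β : ℕ → ((ι ≫ κ) ≫ ι ⟶ ι)) (β' : ℕ → (ι ⟶ (ι ≫ κ) ≫ ι)),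
        ∑ i ∈ Finset.range n, β i ≫ β' i = 𝟙 ((ι ≫ κ) ≫ ι)) ↔
      (∃ (n : ℕ) (y x : ℕ → (ι ≫ κ ⟶ ι ≫ κ)),
        ∑ i ∈ Finset.range n, D.d2comp (x i) (y i) = 𝟙 ((ι ≫ κ) ≫ ι)) := by
  constructor
  · rintro ⟨n, β, β', h⟩
    refine ⟨n, fun i => β' i ▷ κ ≫ (α_ (ι ≫ κ) ι κ).hom ≫ (ι ≫ κ) ◁ D.evR ≫ (ρ_ (ι ≫ κ)).hom,
      fun i => (ρ_ (ι ≫ κ)).inv ≫ (ι ≫ κ) ◁ D.coevL ≫ (α_ (ι ≫ κ) ι κ).inv ≫ β i ▷ κ, ?_⟩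
    have hd : ∀ i, D.d2comp
        ((ρ_ (ι ≫ κ)).inv ≫ (ι ≫ κ) ◁ D.coevL ≫ (α_ (ι ≫ κ) ι κ).inv ≫ β i ▷ κ)
        (β' i ▷ κ ≫ (α_ (ι ≫ κ) ι κ).hom ≫ (ι ≫ κ) ◁ D.evR ≫ (ρ_ (ι ≫ κ)).hom)
        = β i ≫ β' i := by
      intro i
      rw [d2comp_split, bendA D.evL D.coevL D.zig1, bendB D.evR D.coevR D.zig3]
    rw [Finset.sum_congr rfl fun i _ => hd i, h]
  · rintro ⟨n, y, x, h⟩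
    refine ⟨n, fun i => x i ▷ ι ≫ (α_ ι κ ι).hom ≫ ι ◁ D.evL ≫ (ρ_ ι).hom,
      fun i => (ρ_ ι).inv ≫ ι ◁ D.coevR ≫ (α_ ι κ ι).inv ≫ y i ▷ ι, ?_⟩
    have hd : ∀ i, (x i ▷ ι ≫ (α_ ι κ ι).hom ≫ ι ◁ D.evL ≫ (ρ_ ι).hom) ≫
        ((ρ_ ι).inv ≫ ι ◁ D.coevR ≫ (α_ ι κ ι).inv ≫ y i ▷ ι) = D.d2comp (x i) (y i) :=
      fun i => (d2comp_split D (x i) (y i)).symm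
    rw [Finset.sum_congr rfl fun i _ => hd i, h]
end

section
/- In a Hopf algebroid (A_L, A_R, S), an element Υ ∈ A is a right integral (Υa = Υ s_R(π_R(a)) for all a) if and only if S(Υ) is a left integral (a S(Υ) = s_L(π_L(a)) S(Υ) for all a), and if and only if S⁻¹(Υ) is a left integral. -/
universe u

/-- A Böhm–Szlachányi Hopf algebroid with total ring `A`, left bialgebroid structure over `L`
and right bialgebroid structure over `R`.  The coproducts `γ_L(a) = ∑ᵢ c1 a i ⊗ c2 a i`
(`i < nL a`) and `γ_R(a) = ∑ᵢ d1 a i ⊗ d2 a i` (`i < nR a`) are recorded by chosen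
representatives; all identities involving them are stated by evaluation against arbitrary
balanced biadditive maps, which is exactly equality in the corresponding tensor product
over the (non-commutative) base ring.  Multiplication in `A` is written in the same order
as in the paper. -/
structure HopfAlgebroidData (A L R : Type u) [Ring A] [Ring L] [Ring R] where
  sL : L → A
  tL : L → A
  sR : R → A
  tR : R → A
  sL_one : sL 1 = 1
  sL_add : ∀ x y, sL (x + y) = sL x + sL y
  sL_mul : ∀ x y, sL (x * y) = sL x * sL y
  tL_one : tL 1 = 1
  tL_add : ∀ x y, tL (x + y) = tL x + tL y
  tL_mul : ∀ x y, tL (x * y) = tL y * tL x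
  sR_one : sR 1 = 1
  sR_add : ∀ x y, sR (x + y) = sR x + sR y
  sR_mul : ∀ x y, sR (x * y) = sR x * sR y
  tR_one : tR 1 = 1
  tR_add : ∀ x y, tR (x + y) = tR x + tR y
  tR_mul : ∀ x y, tR (x * y) = tR y * tR x
  commL : ∀ l l', sL l * tL l' = tL l' * sL l
  commR : ∀ r r', sR r * tR r' = tR r' * sR r
  /-- number of terms of `γ_L a` -/
  nL : A → ℕ
  c1 : A → ℕ → A
  c2 : A → ℕ → A
  πL : A → L
  /-- number of terms of `γ_R a` -/
  nR : A → ℕ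
  d1 : A → ℕ → A
  d2 : A → ℕ → A
  πR : A → R
  S : A → A
  Sinv : A → A
  -- `γ_L` is additive, a bimodule map `_L A _L → A_L ⊗_L {}_L A`
  -- (with `l·a·l' = sL l * tL l' * a`, balanced maps satisfy `f (tL l * u) v = f u (sL l * v)`)
  comulL_add : ∀ {M : Type u} [AddCommGroup M] (f : A → A → M),
    (∀ u u' v, f (u + u') v = f u v + f u' v) →
    (∀ u v v', f u (v + v') = f u v + f u v') →
    (∀ l u v, f (tL l * u) v = f u (sL l * v)) →
    ∀ a b, (∑ i ∈ Finset.range (nL (a + b)), f (c1 (a + b) i) (c2 (a + b) i)) =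
      (∑ i ∈ Finset.range (nL a), f (c1 a i) (c2 a i)) +
      (∑ i ∈ Finset.range (nL b), f (c1 b i) (c2 b i))
  comulL_bimod : ∀ {M : Type u} [AddCommGroup M] (f : A → A → M),
    (∀ u u' v, f (u + u') v = f u v + f u' v) →
    (∀ u v v', f u (v + v') = f u v + f u v') →
    (∀ l u v, f (tL l * u) v = f u (sL l * v)) →
    ∀ (l l' : L) a,
      (∑ i ∈ Finset.range (nL (sL l * tL l' * a)),
        f (c1 (sL l * tL l' * a) i) (c2 (sL l * tL l' * a) i)) =
      (∑ i ∈ Finset.range (nL a), f (sL l * c1 a i) (tL l' * c2 a i))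
  comulL_coassoc : ∀ {M : Type u} [AddCommGroup M] (g : A → A → A → M),
    (∀ u u' v w, g (u + u') v w = g u v w + g u' v w) →
    (∀ u v v' w, g u (v + v') w = g u v w + g u v' w) →
    (∀ u v w w', g u v (w + w') = g u v w + g u v w') →
    (∀ l u v w, g (tL l * u) v w = g u (sL l * v) w) →
    (∀ l u v w, g u (tL l * v) w = g u v (sL l * w)) →
    ∀ a, (∑ i ∈ Finset.range (nL a), ∑ j ∈ Finset.range (nL (c1 a i)),
        g (c1 (c1 a i) j) (c2 (c1 a i) j) (c2 a i)) =
      (∑ i ∈ Finset.range (nL a), ∑ j ∈ Finset.range (nL (c2 a i)),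
        g (c1 a i) (c1 (c2 a i) j) (c2 (c2 a i) j))
  comulL_takeuchi : ∀ {M : Type u} [AddCommGroup M] (f : A → A → M),
    (∀ u u' v, f (u + u') v = f u v + f u' v) →
    (∀ u v v', f u (v + v') = f u v + f u v') →
    (∀ l u v, f (tL l * u) v = f u (sL l * v)) →
    ∀ (l : L) a, (∑ i ∈ Finset.range (nL a), f (c1 a i * tL l) (c2 a i)) =
      (∑ i ∈ Finset.range (nL a), f (c1 a i) (c2 a i * sL l))
  comulL_one : ∀ {M : Type u} [AddCommGroup M] (f : A → A → M),
    (∀ u u' v, f (u + u') v = f u v + f u' v) →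
    (∀ u v v', f u (v + v') = f u v + f u v') →
    (∀ l u v, f (tL l * u) v = f u (sL l * v)) →
    (∑ i ∈ Finset.range (nL 1), f (c1 1 i) (c2 1 i)) = f 1 1
  comulL_mul : ∀ {M : Type u} [AddCommGroup M] (f : A → A → M),
    (∀ u u' v, f (u + u') v = f u v + f u' v) →
    (∀ u v v', f u (v + v') = f u v + f u v') →
    (∀ l u v, f (tL l * u) v = f u (sL l * v)) →
    ∀ a b, (∑ i ∈ Finset.range (nL (a * b)), f (c1 (a * b) i) (c2 (a * b) i)) =
      (∑ i ∈ Finset.range (nL a), ∑ j ∈ Finset.range (nL b),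
        f (c1 a i * c1 b j) (c2 a i * c2 b j))
  πL_one : πL 1 = 1
  πL_add : ∀ a b, πL (a + b) = πL a + πL b
  counitL_left : ∀ a, (∑ i ∈ Finset.range (nL a), sL (πL (c1 a i)) * c2 a i) = a
  counitL_right : ∀ a, (∑ i ∈ Finset.range (nL a), tL (πL (c2 a i)) * c1 a i) = a
  πL_runit : ∀ a b, πL (a * sL (πL b)) = πL (a * b)
  πL_runit' : ∀ a b, πL (a * tL (πL b)) = πL (a * b)
  -- right bialgebroid data (`r·a·r' = a * sR r' * tR r`, balanced maps satisfy
  -- `f (u * sR r) v = f u (v * tR r)`)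
  comulR_add : ∀ {M : Type u} [AddCommGroup M] (f : A → A → M),
    (∀ u u' v, f (u + u') v = f u v + f u' v) →
    (∀ u v v', f u (v + v') = f u v + f u v') →
    (∀ r u v, f (u * sR r) v = f u (v * tR r)) →
    ∀ a b, (∑ i ∈ Finset.range (nR (a + b)), f (d1 (a + b) i) (d2 (a + b) i)) =
      (∑ i ∈ Finset.range (nR a), f (d1 a i) (d2 a i)) +
      (∑ i ∈ Finset.range (nR b), f (d1 b i) (d2 b i))
  comulR_bimod : ∀ {M : Type u} [AddCommGroup M] (f : A → A → M),
    (∀ u u' v, f (u + u') v = f u v + f u' v) →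
    (∀ u v v', f u (v + v') = f u v + f u v') →
    (∀ r u v, f (u * sR r) v = f u (v * tR r)) →
    ∀ (r r' : R) a,
      (∑ i ∈ Finset.range (nR (a * sR r' * tR r)),
        f (d1 (a * sR r' * tR r) i) (d2 (a * sR r' * tR r) i)) =
      (∑ i ∈ Finset.range (nR a), f (d1 a i * tR r) (d2 a i * sR r'))
  comulR_coassoc : ∀ {M : Type u} [AddCommGroup M] (g : A → A → A → M),
    (∀ u u' v w, g (u + u') v w = g u v w + g u' v w) →
    (∀ u v v' w, g u (v + v') w = g u v w + g u v' w) →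
    (∀ u v w w', g u v (w + w') = g u v w + g u v w') →
    (∀ r u v w, g (u * sR r) v w = g u (v * tR r) w) →
    (∀ r u v w, g u (v * sR r) w = g u v (w * tR r)) →
    ∀ a, (∑ i ∈ Finset.range (nR a), ∑ j ∈ Finset.range (nR (d1 a i)),
        g (d1 (d1 a i) j) (d2 (d1 a i) j) (d2 a i)) =
      (∑ i ∈ Finset.range (nR a), ∑ j ∈ Finset.range (nR (d2 a i)),
        g (d1 a i) (d1 (d2 a i) j) (d2 (d2 a i) j))
  comulR_takeuchi : ∀ {M : Type u} [AddCommGroup M] (f : A → A → M),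
    (∀ u u' v, f (u + u') v = f u v + f u' v) →
    (∀ u v v', f u (v + v') = f u v + f u v') →
    (∀ r u v, f (u * sR r) v = f u (v * tR r)) →
    ∀ (r : R) a, (∑ i ∈ Finset.range (nR a), f (sR r * d1 a i) (d2 a i)) =
      (∑ i ∈ Finset.range (nR a), f (d1 a i) (tR r * d2 a i))
  comulR_one : ∀ {M : Type u} [AddCommGroup M] (f : A → A → M),
    (∀ u u' v, f (u + u') v = f u v + f u' v) →
    (∀ u v v', f u (v + v') = f u v + f u v') →
    (∀ r u v, f (u * sR r) v = f u (v * tR r)) →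
    (∑ i ∈ Finset.range (nR 1), f (d1 1 i) (d2 1 i)) = f 1 1
  comulR_mul : ∀ {M : Type u} [AddCommGroup M] (f : A → A → M),
    (∀ u u' v, f (u + u') v = f u v + f u' v) →
    (∀ u v v', f u (v + v') = f u v + f u v') →
    (∀ r u v, f (u * sR r) v = f u (v * tR r)) →
    ∀ a b, (∑ i ∈ Finset.range (nR (a * b)), f (d1 (a * b) i) (d2 (a * b) i)) =
      (∑ i ∈ Finset.range (nR a), ∑ j ∈ Finset.range (nR b),
        f (d1 a i * d1 b j) (d2 a i * d2 b j))
  πR_one : πR 1 = 1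
  πR_add : ∀ a b, πR (a + b) = πR a + πR b
  counitR_left : ∀ a, (∑ i ∈ Finset.range (nR a), d1 a i * sR (πR (d2 a i))) = a
  counitR_right : ∀ a, (∑ i ∈ Finset.range (nR a), d2 a i * tR (πR (d1 a i))) = a
  πR_lunit : ∀ a b, πR (sR (πR a) * b) = πR (a * b)
  πR_lunit' : ∀ a b, πR (tR (πR a) * b) = πR (a * b)
  -- Hopf algebroid axioms
  range_sL_tR : Set.range sL = Set.range tR
  range_tL_sR : Set.range tL = Set.range sR
  mixed₁ : ∀ {M : Type u} [AddCommGroup M] (g : A → A → A → M),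
    (∀ u u' v w, g (u + u') v w = g u v w + g u' v w) →
    (∀ u v v' w, g u (v + v') w = g u v w + g u v' w) →
    (∀ u v w w', g u v (w + w') = g u v w + g u v w') →
    (∀ l u v w, g (tL l * u) v w = g u (sL l * v) w) →
    (∀ r u v w, g u (v * sR r) w = g u v (w * tR r)) →
    ∀ a, (∑ i ∈ Finset.range (nR a), ∑ j ∈ Finset.range (nL (d1 a i)),
        g (c1 (d1 a i) j) (c2 (d1 a i) j) (d2 a i)) =
      (∑ i ∈ Finset.range (nL a), ∑ j ∈ Finset.range (nR (c2 a i)),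
        g (c1 a i) (d1 (c2 a i) j) (d2 (c2 a i) j))
  mixed₂ : ∀ {M : Type u} [AddCommGroup M] (g : A → A → A → M),
    (∀ u u' v w, g (u + u') v w = g u v w + g u' v w) →
    (∀ u v v' w, g u (v + v') w = g u v w + g u v' w) →
    (∀ u v w w', g u v (w + w') = g u v w + g u v w') →
    (∀ r u v w, g (u * sR r) v w = g u (v * tR r) w) →
    (∀ l u v w, g u (tL l * v) w = g u v (sL l * w)) →
    ∀ a, (∑ i ∈ Finset.range (nL a), ∑ j ∈ Finset.range (nR (c1 a i)),
        g (d1 (c1 a i) j) (d2 (c1 a i) j) (c2 a i)) =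
      (∑ i ∈ Finset.range (nR a), ∑ j ∈ Finset.range (nL (d2 a i)),
        g (d1 a i) (c1 (d2 a i) j) (c2 (d2 a i) j))
  S_add : ∀ a b, S (a + b) = S a + S b
  S_leftinv : ∀ a, Sinv (S a) = a
  S_rightinv : ∀ a, S (Sinv a) = a
  S_twistL : ∀ l l' a, S (tL l * a * tL l') = sL l' * S a * sL l
  S_twistR : ∀ r r' a, S (tR r' * a * tR r) = sR r * S a * sR r'
  antipode_L : ∀ a, (∑ i ∈ Finset.range (nL a), S (c1 a i) * c2 a i) = sR (πR a)
  antipode_R : ∀ a, (∑ i ∈ Finset.range (nR a), d1 a i * S (d2 a i)) = sL (πL a)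


namespace HopfAlgebroidData

variable {A L R : Type u} [Ring A] [Ring L] [Ring R] (H : HopfAlgebroidData A L R)

/-- Additive maps commute with finite sums. -/
theorem addf_sum {M N : Type*} [AddCommGroup M] [AddCommGroup N] (φ : M → N)
    (hφ : ∀ x y, φ (x + y) = φ x + φ y) (n : ℕ) (g : ℕ → M) :
    φ (∑ i ∈ Finset.range n, g i) = ∑ i ∈ Finset.range n, φ (g i) := by
  have h0 : φ 0 = 0 := by
    have := hφ 0 0
    rw [add_zero] at this
    exact (left_eq_add.mp this)
  induction n with
  | zero => simpa using h0
  | succ n ih => rw [Finset.sum_range_succ, Finset.sum_range_succ, hφ, ih]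

theorem S_tL_left (l : L) (u : A) : H.S (H.tL l * u) = H.S u * H.sL l := by
  have h := H.S_twistL l 1 u
  simpa [H.tL_one, H.sL_one] using h

theorem S_tL_right (l : L) (u : A) : H.S (u * H.tL l) = H.sL l * H.S u := by
  have h := H.S_twistL 1 l u
  simpa [H.tL_one, H.sL_one] using h

theorem S_tR_left (r : R) (u : A) : H.S (H.tR r * u) = H.S u * H.sR r := by
  have h := H.S_twistR 1 r u
  simpa [H.tR_one, H.sR_one] using h

theorem S_tR_right (r : R) (u : A) : H.S (u * H.tR r) = H.sR r * H.S u := by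
  have h := H.S_twistR r 1 u
  simpa [H.tR_one, H.sR_one] using h

theorem S_one : H.S 1 = 1 := by
  have h := H.comulL_one (M := A) (f := fun u v => H.S u * v)
    (by intro u u' v; simp [H.S_add, add_mul])
    (by intro u v v'; simp [mul_add])
    (by intro l u v; simp only [H.S_tL_left, mul_assoc])
  have h2 := H.antipode_L 1
  simp only [h2] at h
  rw [H.πR_one, H.sR_one] at h
  simpa using h.symm

theorem S_tL (l : L) : H.S (H.tL l) = H.sL l := by
  have := H.S_tL_left l 1
  simpa [H.S_one] using this

theorem S_tR (r : R) : H.S (H.tR r) = H.sR r := by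
  have := H.S_tR_left r 1
  simpa [H.S_one] using this

theorem Sinv_eq (x y : A) (h : H.S y = x) : H.Sinv x = y := by
  rw [← h, H.S_leftinv]

theorem Sinv_add (x y : A) : H.Sinv (x + y) = H.Sinv x + H.Sinv y := by
  apply H.Sinv_eq
  rw [H.S_add, H.S_rightinv, H.S_rightinv]

theorem Sinv_one : H.Sinv 1 = 1 := H.Sinv_eq 1 1 H.S_one

theorem Sinv_sL_left (l : L) (u : A) : H.Sinv (H.sL l * u) = H.Sinv u * H.tL l := by
  apply H.Sinv_eq
  rw [H.S_tL_right, H.S_rightinv]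

theorem Sinv_sL_right (l : L) (u : A) : H.Sinv (u * H.sL l) = H.tL l * H.Sinv u := by
  apply H.Sinv_eq
  rw [H.S_tL_left, H.S_rightinv]

theorem Sinv_sR_left (r : R) (u : A) : H.Sinv (H.sR r * u) = H.Sinv u * H.tR r := by
  apply H.Sinv_eq
  rw [H.S_tR_right, H.S_rightinv]

theorem Sinv_sR_right (r : R) (u : A) : H.Sinv (u * H.sR r) = H.tR r * H.Sinv u := by
  apply H.Sinv_eq
  rw [H.S_tR_left, H.S_rightinv]

theorem Sinv_sL (l : L) : H.Sinv (H.sL l) = H.tL l := H.Sinv_eq _ _ (H.S_tL l)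

theorem Sinv_sR (r : R) : H.Sinv (H.sR r) = H.tR r := H.Sinv_eq _ _ (H.S_tR r)

theorem ex_tL_sR (r : R) : ∃ l, H.tL l = H.sR r := by
  have : H.sR r ∈ Set.range H.tL := by rw [H.range_tL_sR]; exact ⟨r, rfl⟩
  exact this

theorem ex_tR_sL (l : L) : ∃ r, H.tR r = H.sL l := by
  have : H.sL l ∈ Set.range H.tR := by rw [← H.range_sL_tR]; exact ⟨l, rfl⟩
  exact this

theorem sL_comm_sR (l : L) (r : R) : H.sL l * H.sR r = H.sR r * H.sL l := by
  obtain ⟨ρ, hρ⟩ := H.ex_tR_sL l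
  rw [← hρ]
  exact (H.commR r ρ).symm

end HopfAlgebroidData
namespace HopfAlgebroidData

variable {A L R : Type u} [Ring A] [Ring L] [Ring R] (H : HopfAlgebroidData A L R)

section Absorb

variable {M : Type u} [AddCommGroup M]

theorem sumL_tLmul (f : A → A → M)
    (h1 : ∀ u u' v, f (u + u') v = f u v + f u' v)
    (h2 : ∀ u v v', f u (v + v') = f u v + f u v')
    (h3 : ∀ l u v, f (H.tL l * u) v = f u (H.sL l * v)) (l : L) (a : A) :
    (∑ i ∈ Finset.range (H.nL (H.tL l * a)), f (H.c1 (H.tL l * a) i) (H.c2 (H.tL l * a) i)) =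
      ∑ i ∈ Finset.range (H.nL a), f (H.c1 a i) (H.tL l * H.c2 a i) := by
  have h := H.comulL_bimod f h1 h2 h3 1 l a
  simpa [H.sL_one] using h

theorem sumL_sLmul (f : A → A → M)
    (h1 : ∀ u u' v, f (u + u') v = f u v + f u' v)
    (h2 : ∀ u v v', f u (v + v') = f u v + f u v')
    (h3 : ∀ l u v, f (H.tL l * u) v = f u (H.sL l * v)) (l : L) (a : A) :
    (∑ i ∈ Finset.range (H.nL (H.sL l * a)), f (H.c1 (H.sL l * a) i) (H.c2 (H.sL l * a) i)) =
      ∑ i ∈ Finset.range (H.nL a), f (H.sL l * H.c1 a i) (H.c2 a i) := by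
  have h := H.comulL_bimod f h1 h2 h3 l 1 a
  simpa [H.tL_one] using h

theorem sumL_tLel (f : A → A → M)
    (h1 : ∀ u u' v, f (u + u') v = f u v + f u' v)
    (h2 : ∀ u v v', f u (v + v') = f u v + f u v')
    (h3 : ∀ l u v, f (H.tL l * u) v = f u (H.sL l * v)) (l : L) :
    (∑ i ∈ Finset.range (H.nL (H.tL l)), f (H.c1 (H.tL l) i) (H.c2 (H.tL l) i)) =
      f 1 (H.tL l) := by
  have h := H.sumL_tLmul f h1 h2 h3 l 1
  rw [mul_one] at h
  rw [h]
  have h2' := H.comulL_one (M := M) (f := fun u v => f u (H.tL l * v))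
    (by intro u u' v; exact h1 u u' _)
    (by intro u v v'; show f u (H.tL l * (v + v')) = _; rw [mul_add]; exact h2 u _ _)
    (by intro l' u v
        show f (H.tL l' * u) (H.tL l * v) = f u (H.tL l * (H.sL l' * v))
        rw [h3, ← mul_assoc, H.commL, mul_assoc])
  simpa using h2'

theorem sumL_sLel (f : A → A → M)
    (h1 : ∀ u u' v, f (u + u') v = f u v + f u' v)
    (h2 : ∀ u v v', f u (v + v') = f u v + f u v')
    (h3 : ∀ l u v, f (H.tL l * u) v = f u (H.sL l * v)) (l : L) :
    (∑ i ∈ Finset.range (H.nL (H.sL l)), f (H.c1 (H.sL l) i) (H.c2 (H.sL l) i)) =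
      f (H.sL l) 1 := by
  have h := H.sumL_sLmul f h1 h2 h3 l 1
  rw [mul_one] at h
  rw [h]
  have h2' := H.comulL_one (M := M) (f := fun u v => f (H.sL l * u) v)
    (by intro u u' v; show f (H.sL l * (u + u')) v = _; rw [mul_add]; exact h1 _ _ _)
    (by intro u v v'; exact h2 _ v v')
    (by intro l' u v
        show f (H.sL l * (H.tL l' * u)) v = f (H.sL l * u) (H.sL l' * v)
        rw [← mul_assoc, H.commL, mul_assoc, h3])
  simpa using h2'

theorem sumL_mulTL (f : A → A → M)
    (h1 : ∀ u u' v, f (u + u') v = f u v + f u' v)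
    (h2 : ∀ u v v', f u (v + v') = f u v + f u v')
    (h3 : ∀ l u v, f (H.tL l * u) v = f u (H.sL l * v)) (a : A) (l : L) :
    (∑ i ∈ Finset.range (H.nL (a * H.tL l)), f (H.c1 (a * H.tL l) i) (H.c2 (a * H.tL l) i)) =
      ∑ i ∈ Finset.range (H.nL a), f (H.c1 a i) (H.c2 a i * H.tL l) := by
  rw [H.comulL_mul f h1 h2 h3 a (H.tL l), Finset.sum_comm]
  have hm1 : ∀ u u' v, (∑ i ∈ Finset.range (H.nL a), f (H.c1 a i * (u + u')) (H.c2 a i * v)) =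
      (∑ i ∈ Finset.range (H.nL a), f (H.c1 a i * u) (H.c2 a i * v)) +
      (∑ i ∈ Finset.range (H.nL a), f (H.c1 a i * u') (H.c2 a i * v)) := by
    intro u u' v
    rw [← Finset.sum_add_distrib]
    exact Finset.sum_congr rfl fun i _ => by rw [mul_add, h1]
  have hm2 : ∀ u v v', (∑ i ∈ Finset.range (H.nL a), f (H.c1 a i * u) (H.c2 a i * (v + v'))) =
      (∑ i ∈ Finset.range (H.nL a), f (H.c1 a i * u) (H.c2 a i * v)) +
      (∑ i ∈ Finset.range (H.nL a), f (H.c1 a i * u) (H.c2 a i * v')) := by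
    intro u v v'
    rw [← Finset.sum_add_distrib]
    exact Finset.sum_congr rfl fun i _ => by rw [mul_add, h2]
  have hm3 : ∀ (μ : L) (u v : A),
      (∑ i ∈ Finset.range (H.nL a), f (H.c1 a i * (H.tL μ * u)) (H.c2 a i * v)) =
      (∑ i ∈ Finset.range (H.nL a), f (H.c1 a i * u) (H.c2 a i * (H.sL μ * v))) := by
    intro μ u v
    have htak := H.comulL_takeuchi (M := M) (f := fun p q => f (p * u) (q * v))
      (by intro p p' q; show f ((p + p') * u) (q * v) = _; rw [add_mul, h1])
      (by intro p q q'; show f (p * u) ((q + q') * v) = _; rw [add_mul, h2])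
      (by intro ν p q
          show f (H.tL ν * p * u) (q * v) = f (p * u) (H.sL ν * q * v)
          rw [mul_assoc, h3, mul_assoc])
      μ a
    calc (∑ i ∈ Finset.range (H.nL a), f (H.c1 a i * (H.tL μ * u)) (H.c2 a i * v))
        = ∑ i ∈ Finset.range (H.nL a), f (H.c1 a i * H.tL μ * u) (H.c2 a i * v) :=
          Finset.sum_congr rfl fun i _ => by rw [mul_assoc]
      _ = ∑ i ∈ Finset.range (H.nL a), f (H.c1 a i * u) (H.c2 a i * H.sL μ * v) := htak
      _ = _ := Finset.sum_congr rfl fun i _ => by rw [mul_assoc]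
  have key := H.sumL_tLel (M := M)
    (f := fun u v => ∑ i ∈ Finset.range (H.nL a), f (H.c1 a i * u) (H.c2 a i * v))
    hm1 hm2 hm3 l
  simpa using key

theorem sumL_mulSL (f : A → A → M)
    (h1 : ∀ u u' v, f (u + u') v = f u v + f u' v)
    (h2 : ∀ u v v', f u (v + v') = f u v + f u v')
    (h3 : ∀ l u v, f (H.tL l * u) v = f u (H.sL l * v)) (a : A) (l : L) :
    (∑ i ∈ Finset.range (H.nL (a * H.sL l)), f (H.c1 (a * H.sL l) i) (H.c2 (a * H.sL l) i)) =
      ∑ i ∈ Finset.range (H.nL a), f (H.c1 a i * H.sL l) (H.c2 a i) := by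
  rw [H.comulL_mul f h1 h2 h3 a (H.sL l), Finset.sum_comm]
  have hm1 : ∀ u u' v, (∑ i ∈ Finset.range (H.nL a), f (H.c1 a i * (u + u')) (H.c2 a i * v)) =
      (∑ i ∈ Finset.range (H.nL a), f (H.c1 a i * u) (H.c2 a i * v)) +
      (∑ i ∈ Finset.range (H.nL a), f (H.c1 a i * u') (H.c2 a i * v)) := by
    intro u u' v
    rw [← Finset.sum_add_distrib]
    exact Finset.sum_congr rfl fun i _ => by rw [mul_add, h1]
  have hm2 : ∀ u v v', (∑ i ∈ Finset.range (H.nL a), f (H.c1 a i * u) (H.c2 a i * (v + v'))) =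
      (∑ i ∈ Finset.range (H.nL a), f (H.c1 a i * u) (H.c2 a i * v)) +
      (∑ i ∈ Finset.range (H.nL a), f (H.c1 a i * u) (H.c2 a i * v')) := by
    intro u v v'
    rw [← Finset.sum_add_distrib]
    exact Finset.sum_congr rfl fun i _ => by rw [mul_add, h2]
  have hm3 : ∀ (μ : L) (u v : A),
      (∑ i ∈ Finset.range (H.nL a), f (H.c1 a i * (H.tL μ * u)) (H.c2 a i * v)) =
      (∑ i ∈ Finset.range (H.nL a), f (H.c1 a i * u) (H.c2 a i * (H.sL μ * v))) := by
    intro μ u v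
    have htak := H.comulL_takeuchi (M := M) (f := fun p q => f (p * u) (q * v))
      (by intro p p' q; show f ((p + p') * u) (q * v) = _; rw [add_mul, h1])
      (by intro p q q'; show f (p * u) ((q + q') * v) = _; rw [add_mul, h2])
      (by intro ν p q
          show f (H.tL ν * p * u) (q * v) = f (p * u) (H.sL ν * q * v)
          rw [mul_assoc, h3, mul_assoc])
      μ a
    calc (∑ i ∈ Finset.range (H.nL a), f (H.c1 a i * (H.tL μ * u)) (H.c2 a i * v))
        = ∑ i ∈ Finset.range (H.nL a), f (H.c1 a i * H.tL μ * u) (H.c2 a i * v) :=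
          Finset.sum_congr rfl fun i _ => by rw [mul_assoc]
      _ = ∑ i ∈ Finset.range (H.nL a), f (H.c1 a i * u) (H.c2 a i * H.sL μ * v) := htak
      _ = _ := Finset.sum_congr rfl fun i _ => by rw [mul_assoc]
  have key := H.sumL_sLel (M := M)
    (f := fun u v => ∑ i ∈ Finset.range (H.nL a), f (H.c1 a i * u) (H.c2 a i * v))
    hm1 hm2 hm3 l
  simpa using key

theorem sumR_mulTR (f : A → A → M)
    (h1 : ∀ u u' v, f (u + u') v = f u v + f u' v)
    (h2 : ∀ u v v', f u (v + v') = f u v + f u v')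
    (h3 : ∀ r u v, f (u * H.sR r) v = f u (v * H.tR r)) (a : A) (r : R) :
    (∑ i ∈ Finset.range (H.nR (a * H.tR r)), f (H.d1 (a * H.tR r) i) (H.d2 (a * H.tR r) i)) =
      ∑ i ∈ Finset.range (H.nR a), f (H.d1 a i * H.tR r) (H.d2 a i) := by
  have h := H.comulR_bimod f h1 h2 h3 r 1 a
  simpa [H.sR_one] using h

theorem sumR_mulSR (f : A → A → M)
    (h1 : ∀ u u' v, f (u + u') v = f u v + f u' v)
    (h2 : ∀ u v v', f u (v + v') = f u v + f u v')
    (h3 : ∀ r u v, f (u * H.sR r) v = f u (v * H.tR r)) (a : A) (r : R) :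
    (∑ i ∈ Finset.range (H.nR (a * H.sR r)), f (H.d1 (a * H.sR r) i) (H.d2 (a * H.sR r) i)) =
      ∑ i ∈ Finset.range (H.nR a), f (H.d1 a i) (H.d2 a i * H.sR r) := by
  have h := H.comulR_bimod f h1 h2 h3 1 r a
  simpa [H.tR_one] using h

theorem sumR_tRel (f : A → A → M)
    (h1 : ∀ u u' v, f (u + u') v = f u v + f u' v)
    (h2 : ∀ u v v', f u (v + v') = f u v + f u v')
    (h3 : ∀ r u v, f (u * H.sR r) v = f u (v * H.tR r)) (r : R) :
    (∑ i ∈ Finset.range (H.nR (H.tR r)), f (H.d1 (H.tR r) i) (H.d2 (H.tR r) i)) =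
      f (H.tR r) 1 := by
  have h := H.sumR_mulTR f h1 h2 h3 1 r
  rw [one_mul] at h
  rw [h]
  have h2' := H.comulR_one (M := M) (f := fun u v => f (u * H.tR r) v)
    (by intro u u' v; show f ((u + u') * H.tR r) v = _; rw [add_mul]; exact h1 _ _ _)
    (by intro u v v'; exact h2 _ v v')
    (by intro r' u v
        show f (u * H.sR r' * H.tR r) v = f (u * H.tR r) (v * H.tR r')
        rw [mul_assoc, H.commR, ← mul_assoc, h3])
  simpa using h2'

theorem sumR_sRel (f : A → A → M)
    (h1 : ∀ u u' v, f (u + u') v = f u v + f u' v)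
    (h2 : ∀ u v v', f u (v + v') = f u v + f u v')
    (h3 : ∀ r u v, f (u * H.sR r) v = f u (v * H.tR r)) (r : R) :
    (∑ i ∈ Finset.range (H.nR (H.sR r)), f (H.d1 (H.sR r) i) (H.d2 (H.sR r) i)) =
      f 1 (H.sR r) := by
  have h := H.sumR_mulSR f h1 h2 h3 1 r
  rw [one_mul] at h
  rw [h]
  have h2' := H.comulR_one (M := M) (f := fun u v => f u (v * H.sR r))
    (by intro u u' v; exact h1 u u' _)
    (by intro u v v'; show f u ((v + v') * H.sR r) = _; rw [add_mul]; exact h2 _ _ _)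
    (by intro r' u v
        show f (u * H.sR r') (v * H.sR r) = f u (v * H.tR r' * H.sR r)
        rw [h3, mul_assoc, H.commR, ← mul_assoc])
  simpa using h2'

theorem sumR_tRlmul (f : A → A → M)
    (h1 : ∀ u u' v, f (u + u') v = f u v + f u' v)
    (h2 : ∀ u v v', f u (v + v') = f u v + f u v')
    (h3 : ∀ r u v, f (u * H.sR r) v = f u (v * H.tR r)) (r : R) (a : A) :
    (∑ i ∈ Finset.range (H.nR (H.tR r * a)), f (H.d1 (H.tR r * a) i) (H.d2 (H.tR r * a) i)) =
      ∑ i ∈ Finset.range (H.nR a), f (H.tR r * H.d1 a i) (H.d2 a i) := by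
  rw [H.comulR_mul f h1 h2 h3 (H.tR r) a]
  have hm1 : ∀ u u' v, (∑ j ∈ Finset.range (H.nR a), f ((u + u') * H.d1 a j) (v * H.d2 a j)) =
      (∑ j ∈ Finset.range (H.nR a), f (u * H.d1 a j) (v * H.d2 a j)) +
      (∑ j ∈ Finset.range (H.nR a), f (u' * H.d1 a j) (v * H.d2 a j)) := by
    intro u u' v
    rw [← Finset.sum_add_distrib]
    exact Finset.sum_congr rfl fun j _ => by rw [add_mul, h1]
  have hm2 : ∀ u v v', (∑ j ∈ Finset.range (H.nR a), f (u * H.d1 a j) ((v + v') * H.d2 a j)) =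
      (∑ j ∈ Finset.range (H.nR a), f (u * H.d1 a j) (v * H.d2 a j)) +
      (∑ j ∈ Finset.range (H.nR a), f (u * H.d1 a j) (v' * H.d2 a j)) := by
    intro u v v'
    rw [← Finset.sum_add_distrib]
    exact Finset.sum_congr rfl fun j _ => by rw [add_mul, h2]
  have hm3 : ∀ (ρ : R) (u v : A),
      (∑ j ∈ Finset.range (H.nR a), f (u * H.sR ρ * H.d1 a j) (v * H.d2 a j)) =
      (∑ j ∈ Finset.range (H.nR a), f (u * H.d1 a j) (v * H.tR ρ * H.d2 a j)) := by
    intro ρ u v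
    have htak := H.comulR_takeuchi (M := M) (f := fun p q => f (u * p) (v * q))
      (by intro p p' q; show f (u * (p + p')) (v * q) = _; rw [mul_add, h1])
      (by intro p q q'; show f (u * p) (v * (q + q')) = _; rw [mul_add, h2])
      (by intro σ p q
          show f (u * (p * H.sR σ)) (v * q) = f (u * p) (v * (q * H.tR σ))
          rw [← mul_assoc, h3, mul_assoc])
      ρ a
    calc (∑ j ∈ Finset.range (H.nR a), f (u * H.sR ρ * H.d1 a j) (v * H.d2 a j))
        = ∑ j ∈ Finset.range (H.nR a), f (u * (H.sR ρ * H.d1 a j)) (v * H.d2 a j) :=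
          Finset.sum_congr rfl fun j _ => by rw [mul_assoc]
      _ = ∑ j ∈ Finset.range (H.nR a), f (u * H.d1 a j) (v * (H.tR ρ * H.d2 a j)) := htak
      _ = _ := Finset.sum_congr rfl fun j _ => by rw [mul_assoc]
  have key := H.sumR_tRel (M := M)
    (f := fun u v => ∑ j ∈ Finset.range (H.nR a), f (u * H.d1 a j) (v * H.d2 a j))
    hm1 hm2 hm3 r
  simpa using key

theorem sumR_sRlmul (f : A → A → M)
    (h1 : ∀ u u' v, f (u + u') v = f u v + f u' v)
    (h2 : ∀ u v v', f u (v + v') = f u v + f u v')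
    (h3 : ∀ r u v, f (u * H.sR r) v = f u (v * H.tR r)) (r : R) (a : A) :
    (∑ i ∈ Finset.range (H.nR (H.sR r * a)), f (H.d1 (H.sR r * a) i) (H.d2 (H.sR r * a) i)) =
      ∑ i ∈ Finset.range (H.nR a), f (H.d1 a i) (H.sR r * H.d2 a i) := by
  rw [H.comulR_mul f h1 h2 h3 (H.sR r) a]
  have hm1 : ∀ u u' v, (∑ j ∈ Finset.range (H.nR a), f ((u + u') * H.d1 a j) (v * H.d2 a j)) =
      (∑ j ∈ Finset.range (H.nR a), f (u * H.d1 a j) (v * H.d2 a j)) +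
      (∑ j ∈ Finset.range (H.nR a), f (u' * H.d1 a j) (v * H.d2 a j)) := by
    intro u u' v
    rw [← Finset.sum_add_distrib]
    exact Finset.sum_congr rfl fun j _ => by rw [add_mul, h1]
  have hm2 : ∀ u v v', (∑ j ∈ Finset.range (H.nR a), f (u * H.d1 a j) ((v + v') * H.d2 a j)) =
      (∑ j ∈ Finset.range (H.nR a), f (u * H.d1 a j) (v * H.d2 a j)) +
      (∑ j ∈ Finset.range (H.nR a), f (u * H.d1 a j) (v' * H.d2 a j)) := by
    intro u v v'
    rw [← Finset.sum_add_distrib]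
    exact Finset.sum_congr rfl fun j _ => by rw [add_mul, h2]
  have hm3 : ∀ (ρ : R) (u v : A),
      (∑ j ∈ Finset.range (H.nR a), f (u * H.sR ρ * H.d1 a j) (v * H.d2 a j)) =
      (∑ j ∈ Finset.range (H.nR a), f (u * H.d1 a j) (v * H.tR ρ * H.d2 a j)) := by
    intro ρ u v
    have htak := H.comulR_takeuchi (M := M) (f := fun p q => f (u * p) (v * q))
      (by intro p p' q; show f (u * (p + p')) (v * q) = _; rw [mul_add, h1])
      (by intro p q q'; show f (u * p) (v * (q + q')) = _; rw [mul_add, h2])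
      (by intro σ p q
          show f (u * (p * H.sR σ)) (v * q) = f (u * p) (v * (q * H.tR σ))
          rw [← mul_assoc, h3, mul_assoc])
      ρ a
    calc (∑ j ∈ Finset.range (H.nR a), f (u * H.sR ρ * H.d1 a j) (v * H.d2 a j))
        = ∑ j ∈ Finset.range (H.nR a), f (u * (H.sR ρ * H.d1 a j)) (v * H.d2 a j) :=
          Finset.sum_congr rfl fun j _ => by rw [mul_assoc]
      _ = ∑ j ∈ Finset.range (H.nR a), f (u * H.d1 a j) (v * (H.tR ρ * H.d2 a j)) := htak
      _ = _ := Finset.sum_congr rfl fun j _ => by rw [mul_assoc]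
  have key := H.sumR_sRel (M := M)
    (f := fun u v => ∑ j ∈ Finset.range (H.nR a), f (u * H.d1 a j) (v * H.d2 a j))
    hm1 hm2 hm3 r
  simpa using key

end Absorb

end HopfAlgebroidData
namespace HopfAlgebroidData

variable {A L R : Type u} [Ring A] [Ring L] [Ring R] (H : HopfAlgebroidData A L R)

theorem ex_sR_tL (l : L) : ∃ r, H.sR r = H.tL l := by
  have : H.tL l ∈ Set.range H.sR := by rw [← H.range_tL_sR]; exact ⟨l, rfl⟩
  exact this

theorem ex_sL_tR (r : R) : ∃ l, H.sL l = H.tR r := by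
  have : H.tR r ∈ Set.range H.sL := by rw [H.range_sL_tR]; exact ⟨r, rfl⟩
  exact this

/-- `f u v = u * S v` is `γ_R`-balanced. -/
theorem mulS_h1 : ∀ u u' v : A, (u + u') * H.S v = u * H.S v + u' * H.S v := by
  intro u u' v; rw [add_mul]

theorem mulS_h2 : ∀ u v v' : A, u * H.S (v + v') = u * H.S v + u * H.S v' := by
  intro u v v'; rw [H.S_add, mul_add]

theorem mulS_h3 : ∀ (r : R) (u v : A), u * H.sR r * H.S v = u * H.S (v * H.tR r) := by
  intro r u v; rw [H.S_tR_right, ← mul_assoc]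

/-- `f u v = S u * v` is `γ_L`-balanced. -/
theorem Smul_h1 : ∀ u u' v : A, H.S (u + u') * v = H.S u * v + H.S u' * v := by
  intro u u' v; rw [H.S_add, add_mul]

theorem Smul_h2 : ∀ u v v' : A, H.S u * (v + v') = H.S u * v + H.S u * v' := by
  intro u v v'; rw [mul_add]

theorem Smul_h3 : ∀ (l : L) (u v : A), H.S (H.tL l * u) * v = H.S u * (H.sL l * v) := by
  intro l u v; rw [H.S_tL_left, mul_assoc]

theorem PL1 (l : L) (v : A) :
    H.sL (H.πL (H.sL l * v)) = H.sL l * H.sL (H.πL v) := by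
  obtain ⟨ρ, hρ⟩ := H.ex_tR_sL l
  rw [← hρ, ← H.antipode_R (H.tR ρ * v), ← H.antipode_R v, Finset.mul_sum]
  rw [H.sumR_tRlmul (f := fun u w => u * H.S w) H.mulS_h1 H.mulS_h2 H.mulS_h3 ρ v]
  exact Finset.sum_congr rfl fun i _ => by rw [mul_assoc]

theorem PL2 (l : L) (v : A) :
    H.sL (H.πL (H.tL l * v)) = H.sL (H.πL v) * H.sL l := by
  obtain ⟨ρ, hρ⟩ := H.ex_sR_tL l
  rw [← hρ, ← H.antipode_R (H.sR ρ * v), ← H.antipode_R v, Finset.sum_mul]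
  rw [H.sumR_sRlmul (f := fun u w => u * H.S w) H.mulS_h1 H.mulS_h2 H.mulS_h3 ρ v]
  refine Finset.sum_congr rfl fun i _ => ?_
  rw [hρ, H.S_tL_left, ← mul_assoc, mul_assoc]

theorem PR1 (u : A) (r : R) :
    H.sR (H.πR (u * H.sR r)) = H.sR (H.πR u) * H.sR r := by
  obtain ⟨l, hl⟩ := H.ex_tL_sR r
  rw [← hl, ← H.antipode_L (u * H.tL l), ← H.antipode_L u, Finset.sum_mul]
  rw [H.sumL_mulTL (f := fun p q => H.S p * q) H.Smul_h1 H.Smul_h2 H.Smul_h3 u l]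
  exact Finset.sum_congr rfl fun i _ => by rw [mul_assoc]

theorem PR2 (u : A) (r : R) :
    H.sR (H.πR (u * H.tR r)) = H.sR r * H.sR (H.πR u) := by
  obtain ⟨l, hl⟩ := H.ex_sL_tR r
  rw [← hl, ← H.antipode_L (u * H.sL l), ← H.antipode_L u, Finset.mul_sum]
  rw [H.sumL_mulSL (f := fun p q => H.S p * q) H.Smul_h1 H.Smul_h2 H.Smul_h3 u l]
  refine Finset.sum_congr rfl fun i _ => ?_
  rw [hl, H.S_tR_right, mul_assoc]

theorem tLpiL_sL (l : L) (v : A) :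
    H.tL (H.πL (H.sL l * v)) = H.tL (H.πL v) * H.tL l := by
  rw [← H.Sinv_sL (H.πL (H.sL l * v)), H.PL1, H.Sinv_sL_left, H.Sinv_sL]

theorem tLpiL_tL (l : L) (v : A) :
    H.tL (H.πL (H.tL l * v)) = H.tL l * H.tL (H.πL v) := by
  rw [← H.Sinv_sL (H.πL (H.tL l * v)), H.PL2, H.Sinv_sL_right, H.Sinv_sL]

theorem tRpiR_sR (u : A) (r : R) :
    H.tR (H.πR (u * H.sR r)) = H.tR r * H.tR (H.πR u) := by
  rw [← H.Sinv_sR (H.πR (u * H.sR r)), H.PR1, H.Sinv_sR_right, H.Sinv_sR]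

theorem tRpiR_tR (u : A) (r : R) :
    H.tR (H.πR (u * H.tR r)) = H.tR (H.πR u) * H.tR r := by
  rw [← H.Sinv_sR (H.πR (u * H.tR r)), H.PR2, H.Sinv_sR_left, H.Sinv_sR]

/-- decomposition `(A')`:  `S x = ∑ S(x₍₁₎) sL(πL(x₍₂₎))`. -/
theorem S_decompL (x : A) :
    H.S x = ∑ i ∈ Finset.range (H.nL x), H.S (H.c1 x i) * H.sL (H.πL (H.c2 x i)) := by
  calc H.S x = H.S (∑ i ∈ Finset.range (H.nL x), H.tL (H.πL (H.c2 x i)) * H.c1 x i) := by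
        rw [H.counitL_right]
    _ = ∑ i ∈ Finset.range (H.nL x), H.S (H.tL (H.πL (H.c2 x i)) * H.c1 x i) :=
        addf_sum H.S H.S_add _ _
    _ = _ := Finset.sum_congr rfl fun i _ => H.S_tL_left _ _

/-- decomposition `(A)`:  `S x = ∑ sR(πR(x⁽¹⁾)) S(x⁽²⁾)`. -/
theorem S_decompR (x : A) :
    H.S x = ∑ i ∈ Finset.range (H.nR x), H.sR (H.πR (H.d1 x i)) * H.S (H.d2 x i) := by
  calc H.S x = H.S (∑ i ∈ Finset.range (H.nR x), H.d2 x i * H.tR (H.πR (H.d1 x i))) := by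
        rw [H.counitR_right]
    _ = ∑ i ∈ Finset.range (H.nR x), H.S (H.d2 x i * H.tR (H.πR (H.d1 x i))) :=
        addf_sum H.S H.S_add _ _
    _ = _ := Finset.sum_congr rfl fun i _ => H.S_tR_right _ _

/-- `(M')`: `∑ x⁽¹⁾ sL(πL c) S(x⁽²⁾) = sL(πL (x c))`. -/
theorem Mp (x c : A) :
    (∑ i ∈ Finset.range (H.nR x), H.d1 x i * H.sL (H.πL c) * H.S (H.d2 x i)) =
      H.sL (H.πL (x * c)) := by
  obtain ⟨ρ, hρ⟩ := H.ex_tR_sL (H.πL c)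
  have key := H.sumR_mulTR (f := fun u w => u * H.S w) H.mulS_h1 H.mulS_h2 H.mulS_h3 x ρ
  calc (∑ i ∈ Finset.range (H.nR x), H.d1 x i * H.sL (H.πL c) * H.S (H.d2 x i))
      = ∑ i ∈ Finset.range (H.nR x), H.d1 x i * H.tR ρ * H.S (H.d2 x i) := by rw [hρ]
    _ = ∑ i ∈ Finset.range (H.nR (x * H.tR ρ)),
          H.d1 (x * H.tR ρ) i * H.S (H.d2 (x * H.tR ρ) i) := key.symm
    _ = H.sL (H.πL (x * H.tR ρ)) := H.antipode_R _
    _ = H.sL (H.πL (x * H.sL (H.πL c))) := by rw [hρ]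
    _ = H.sL (H.πL (x * c)) := by rw [H.πL_runit]

/-- `(M'')`: `∑ S(x₍₁₎) sR(πR c) x₍₂₎ = sR(πR (c x))`. -/
theorem Mpp (x c : A) :
    (∑ i ∈ Finset.range (H.nL x), H.S (H.c1 x i) * H.sR (H.πR c) * H.c2 x i) =
      H.sR (H.πR (c * x)) := by
  obtain ⟨l, hl⟩ := H.ex_tL_sR (H.πR c)
  have key := H.sumL_tLmul (f := fun p q => H.S p * q) H.Smul_h1 H.Smul_h2 H.Smul_h3 l x
  calc (∑ i ∈ Finset.range (H.nL x), H.S (H.c1 x i) * H.sR (H.πR c) * H.c2 x i)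
      = ∑ i ∈ Finset.range (H.nL x), H.S (H.c1 x i) * (H.tL l * H.c2 x i) := by
        rw [hl]; exact Finset.sum_congr rfl fun i _ => by rw [mul_assoc]
    _ = ∑ i ∈ Finset.range (H.nL (H.tL l * x)),
          H.S (H.c1 (H.tL l * x) i) * H.c2 (H.tL l * x) i := key.symm
    _ = H.sR (H.πR (H.tL l * x)) := H.antipode_L _
    _ = H.sR (H.πR (H.sR (H.πR c) * x)) := by rw [hl]
    _ = H.sR (H.πR (c * x)) := by rw [H.πR_lunit]

end HopfAlgebroidData
namespace HopfAlgebroidData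

variable {A L R : Type u} [Ring A] [Ring L] [Ring R] (H : HopfAlgebroidData A L R)

/-- The antipode is an anti-homomorphism of rings. -/
theorem S_mul (a b : A) : H.S (a * b) = H.S b * H.S a := by
  have way1 :
      (∑ i ∈ Finset.range (H.nL a), ∑ k ∈ Finset.range (H.nR (H.c2 a i)),
        ∑ j ∈ Finset.range (H.nL b), ∑ m ∈ Finset.range (H.nR (H.c2 b j)),
        H.S (H.c1 a i * H.c1 b j) * H.d1 (H.c2 a i) k * H.d1 (H.c2 b j) m *
          H.S (H.d2 (H.c2 b j) m) * H.S (H.d2 (H.c2 a i) k))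
      = H.S (a * b) := by
    have step1 : ∀ i k j,
        (∑ m ∈ Finset.range (H.nR (H.c2 b j)),
          H.S (H.c1 a i * H.c1 b j) * H.d1 (H.c2 a i) k * H.d1 (H.c2 b j) m *
            H.S (H.d2 (H.c2 b j) m) * H.S (H.d2 (H.c2 a i) k))
        = H.S (H.c1 a i * H.c1 b j) * H.d1 (H.c2 a i) k * H.sL (H.πL (H.c2 b j)) *
            H.S (H.d2 (H.c2 a i) k) := by
      intro i k j
      calc (∑ m ∈ Finset.range (H.nR (H.c2 b j)),
            H.S (H.c1 a i * H.c1 b j) * H.d1 (H.c2 a i) k * H.d1 (H.c2 b j) m *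
              H.S (H.d2 (H.c2 b j) m) * H.S (H.d2 (H.c2 a i) k))
          = ∑ m ∈ Finset.range (H.nR (H.c2 b j)),
            H.S (H.c1 a i * H.c1 b j) * H.d1 (H.c2 a i) k *
              (H.d1 (H.c2 b j) m * H.S (H.d2 (H.c2 b j) m)) * H.S (H.d2 (H.c2 a i) k) :=
            Finset.sum_congr rfl fun m _ => by simp only [mul_assoc]
        _ = (H.S (H.c1 a i * H.c1 b j) * H.d1 (H.c2 a i) k *
              (∑ m ∈ Finset.range (H.nR (H.c2 b j)),
                H.d1 (H.c2 b j) m * H.S (H.d2 (H.c2 b j) m))) * H.S (H.d2 (H.c2 a i) k) := by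
            rw [← Finset.sum_mul, ← Finset.mul_sum]
        _ = _ := by rw [H.antipode_R]
    calc (∑ i ∈ Finset.range (H.nL a), ∑ k ∈ Finset.range (H.nR (H.c2 a i)),
        ∑ j ∈ Finset.range (H.nL b), ∑ m ∈ Finset.range (H.nR (H.c2 b j)),
        H.S (H.c1 a i * H.c1 b j) * H.d1 (H.c2 a i) k * H.d1 (H.c2 b j) m *
          H.S (H.d2 (H.c2 b j) m) * H.S (H.d2 (H.c2 a i) k))
        = ∑ i ∈ Finset.range (H.nL a), ∑ k ∈ Finset.range (H.nR (H.c2 a i)),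
          ∑ j ∈ Finset.range (H.nL b),
          H.S (H.c1 a i * H.c1 b j) * H.d1 (H.c2 a i) k * H.sL (H.πL (H.c2 b j)) *
            H.S (H.d2 (H.c2 a i) k) := by
          exact Finset.sum_congr rfl fun i _ => Finset.sum_congr rfl fun k _ =>
            Finset.sum_congr rfl fun j _ => step1 i k j
      _ = ∑ i ∈ Finset.range (H.nL a), ∑ j ∈ Finset.range (H.nL b),
          ∑ k ∈ Finset.range (H.nR (H.c2 a i)),
          H.S (H.c1 a i * H.c1 b j) * H.d1 (H.c2 a i) k * H.sL (H.πL (H.c2 b j)) *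
            H.S (H.d2 (H.c2 a i) k) :=
          Finset.sum_congr rfl fun i _ => Finset.sum_comm
      _ = ∑ i ∈ Finset.range (H.nL a), ∑ j ∈ Finset.range (H.nL b),
          H.S (H.c1 a i * H.c1 b j) * H.sL (H.πL (H.c2 a i * H.c2 b j)) := by
          refine Finset.sum_congr rfl fun i _ => Finset.sum_congr rfl fun j _ => ?_
          calc (∑ k ∈ Finset.range (H.nR (H.c2 a i)),
              H.S (H.c1 a i * H.c1 b j) * H.d1 (H.c2 a i) k * H.sL (H.πL (H.c2 b j)) *
                H.S (H.d2 (H.c2 a i) k))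
              = ∑ k ∈ Finset.range (H.nR (H.c2 a i)),
                H.S (H.c1 a i * H.c1 b j) *
                  (H.d1 (H.c2 a i) k * H.sL (H.πL (H.c2 b j)) * H.S (H.d2 (H.c2 a i) k)) :=
                Finset.sum_congr rfl fun k _ => by simp only [mul_assoc]
            _ = H.S (H.c1 a i * H.c1 b j) *
                ∑ k ∈ Finset.range (H.nR (H.c2 a i)),
                  H.d1 (H.c2 a i) k * H.sL (H.πL (H.c2 b j)) * H.S (H.d2 (H.c2 a i) k) := by
                rw [← Finset.mul_sum]
            _ = _ := by rw [H.Mp]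
      _ = ∑ t ∈ Finset.range (H.nL (a * b)),
            H.S (H.c1 (a * b) t) * H.sL (H.πL (H.c2 (a * b) t)) := by
          refine (H.comulL_mul (M := A) (f := fun u v => H.S u * H.sL (H.πL v))
            ?_ ?_ ?_ a b).symm
          · intro u u' v; show H.S (u + u') * _ = _; rw [H.S_add, add_mul]
          · intro u v v'; show H.S u * H.sL (H.πL (v + v')) = _
            rw [H.πL_add, H.sL_add, mul_add]
          · intro l u v
            show H.S (H.tL l * u) * H.sL (H.πL v) = H.S u * H.sL (H.πL (H.sL l * v))
            rw [H.S_tL_left, H.PL1, mul_assoc]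
      _ = H.S (a * b) := (H.S_decompL (a * b)).symm
  have way2 :
      (∑ i ∈ Finset.range (H.nL a), ∑ k ∈ Finset.range (H.nR (H.c2 a i)),
        ∑ j ∈ Finset.range (H.nL b), ∑ m ∈ Finset.range (H.nR (H.c2 b j)),
        H.S (H.c1 a i * H.c1 b j) * H.d1 (H.c2 a i) k * H.d1 (H.c2 b j) m *
          H.S (H.d2 (H.c2 b j) m) * H.S (H.d2 (H.c2 a i) k))
      = H.S b * H.S a := by
    -- first mixed coassociativity, on `a`
    have m1 := H.mixed₁ (M := A)
      (g := fun x p w => ∑ j ∈ Finset.range (H.nL b), ∑ m ∈ Finset.range (H.nR (H.c2 b j)),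
        H.S (x * H.c1 b j) * p * H.d1 (H.c2 b j) m * H.S (H.d2 (H.c2 b j) m) * H.S w)
      (by intro u u' v w
          show (∑ j ∈ Finset.range (H.nL b), ∑ m ∈ Finset.range (H.nR (H.c2 b j)),
            H.S ((u + u') * H.c1 b j) * v * H.d1 (H.c2 b j) m * H.S (H.d2 (H.c2 b j) m) * H.S w) = _
          simp only [add_mul, H.S_add, Finset.sum_add_distrib])
      (by intro u v v' w
          show (∑ j ∈ Finset.range (H.nL b), ∑ m ∈ Finset.range (H.nR (H.c2 b j)),
            H.S (u * H.c1 b j) * (v + v') * H.d1 (H.c2 b j) m * H.S (H.d2 (H.c2 b j) m) * H.S w) = _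
          simp only [mul_add, add_mul, Finset.sum_add_distrib])
      (by intro u v w w'
          show (∑ j ∈ Finset.range (H.nL b), ∑ m ∈ Finset.range (H.nR (H.c2 b j)),
            H.S (u * H.c1 b j) * v * H.d1 (H.c2 b j) m * H.S (H.d2 (H.c2 b j) m) * H.S (w + w')) = _
          simp only [H.S_add, mul_add, Finset.sum_add_distrib])
      (by intro l u v w
          refine Finset.sum_congr rfl fun j _ => Finset.sum_congr rfl fun m _ => ?_
          show H.S (H.tL l * u * H.c1 b j) * v * H.d1 (H.c2 b j) m *
              H.S (H.d2 (H.c2 b j) m) * H.S w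
            = H.S (u * H.c1 b j) * (H.sL l * v) * H.d1 (H.c2 b j) m *
              H.S (H.d2 (H.c2 b j) m) * H.S w
          rw [mul_assoc (H.tL l) u (H.c1 b j), H.S_tL_left]
          simp only [mul_assoc])
      (by intro r u v w
          refine Finset.sum_congr rfl fun j _ => ?_
          have htak := H.comulR_takeuchi (M := A)
            (f := fun q1 q2 => H.S (u * H.c1 b j) * v * q1 * H.S q2 * H.S w)
            (by intro q q' q2
                show H.S (u * H.c1 b j) * v * (q + q') * H.S q2 * H.S w = _
                simp only [mul_add, add_mul])
            (by intro q1 q2 q2'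
                show H.S (u * H.c1 b j) * v * q1 * H.S (q2 + q2') * H.S w = _
                simp only [H.S_add, mul_add, add_mul])
            (by intro σ q1 q2
                show H.S (u * H.c1 b j) * v * (q1 * H.sR σ) * H.S q2 * H.S w
                  = H.S (u * H.c1 b j) * v * q1 * H.S (q2 * H.tR σ) * H.S w
                rw [H.S_tR_right]; simp only [mul_assoc])
            r (H.c2 b j)
          calc (∑ m ∈ Finset.range (H.nR (H.c2 b j)),
              H.S (u * H.c1 b j) * (v * H.sR r) * H.d1 (H.c2 b j) m *
                H.S (H.d2 (H.c2 b j) m) * H.S w)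
              = ∑ m ∈ Finset.range (H.nR (H.c2 b j)),
                H.S (u * H.c1 b j) * v * (H.sR r * H.d1 (H.c2 b j) m) *
                  H.S (H.d2 (H.c2 b j) m) * H.S w :=
                Finset.sum_congr rfl fun m _ => by simp only [mul_assoc]
            _ = ∑ m ∈ Finset.range (H.nR (H.c2 b j)),
                H.S (u * H.c1 b j) * v * H.d1 (H.c2 b j) m *
                  H.S (H.tR r * H.d2 (H.c2 b j) m) * H.S w := htak
            _ = ∑ m ∈ Finset.range (H.nR (H.c2 b j)),
                H.S (u * H.c1 b j) * v * H.d1 (H.c2 b j) m *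
                  H.S (H.d2 (H.c2 b j) m) * H.S (w * H.tR r) := by
                refine Finset.sum_congr rfl fun m _ => ?_
                rw [H.S_tR_left, H.S_tR_right]; simp only [mul_assoc])
      a
    calc (∑ i ∈ Finset.range (H.nL a), ∑ k ∈ Finset.range (H.nR (H.c2 a i)),
        ∑ j ∈ Finset.range (H.nL b), ∑ m ∈ Finset.range (H.nR (H.c2 b j)),
        H.S (H.c1 a i * H.c1 b j) * H.d1 (H.c2 a i) k * H.d1 (H.c2 b j) m *
          H.S (H.d2 (H.c2 b j) m) * H.S (H.d2 (H.c2 a i) k))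
        = ∑ i ∈ Finset.range (H.nR a), ∑ t ∈ Finset.range (H.nL (H.d1 a i)),
          ∑ j ∈ Finset.range (H.nL b), ∑ m ∈ Finset.range (H.nR (H.c2 b j)),
          H.S (H.c1 (H.d1 a i) t * H.c1 b j) * H.c2 (H.d1 a i) t * H.d1 (H.c2 b j) m *
            H.S (H.d2 (H.c2 b j) m) * H.S (H.d2 a i) := m1.symm
      -- reorder sums to put the `b`-sums outside
      _ = ∑ j ∈ Finset.range (H.nL b), ∑ m ∈ Finset.range (H.nR (H.c2 b j)),
          ∑ i ∈ Finset.range (H.nR a), ∑ t ∈ Finset.range (H.nL (H.d1 a i)),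
          H.S (H.c1 (H.d1 a i) t * H.c1 b j) * H.c2 (H.d1 a i) t * H.d1 (H.c2 b j) m *
            H.S (H.d2 (H.c2 b j) m) * H.S (H.d2 a i) := by
          calc (∑ i ∈ Finset.range (H.nR a), ∑ t ∈ Finset.range (H.nL (H.d1 a i)),
            ∑ j ∈ Finset.range (H.nL b), ∑ m ∈ Finset.range (H.nR (H.c2 b j)),
            H.S (H.c1 (H.d1 a i) t * H.c1 b j) * H.c2 (H.d1 a i) t * H.d1 (H.c2 b j) m *
              H.S (H.d2 (H.c2 b j) m) * H.S (H.d2 a i))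
              = ∑ i ∈ Finset.range (H.nR a), ∑ j ∈ Finset.range (H.nL b),
                ∑ t ∈ Finset.range (H.nL (H.d1 a i)), ∑ m ∈ Finset.range (H.nR (H.c2 b j)),
                H.S (H.c1 (H.d1 a i) t * H.c1 b j) * H.c2 (H.d1 a i) t * H.d1 (H.c2 b j) m *
                  H.S (H.d2 (H.c2 b j) m) * H.S (H.d2 a i) :=
                Finset.sum_congr rfl fun i _ => Finset.sum_comm
            _ = ∑ j ∈ Finset.range (H.nL b), ∑ i ∈ Finset.range (H.nR a),
                ∑ t ∈ Finset.range (H.nL (H.d1 a i)), ∑ m ∈ Finset.range (H.nR (H.c2 b j)),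
                H.S (H.c1 (H.d1 a i) t * H.c1 b j) * H.c2 (H.d1 a i) t * H.d1 (H.c2 b j) m *
                  H.S (H.d2 (H.c2 b j) m) * H.S (H.d2 a i) := Finset.sum_comm
            _ = ∑ j ∈ Finset.range (H.nL b), ∑ i ∈ Finset.range (H.nR a),
                ∑ m ∈ Finset.range (H.nR (H.c2 b j)), ∑ t ∈ Finset.range (H.nL (H.d1 a i)),
                H.S (H.c1 (H.d1 a i) t * H.c1 b j) * H.c2 (H.d1 a i) t * H.d1 (H.c2 b j) m *
                  H.S (H.d2 (H.c2 b j) m) * H.S (H.d2 a i) :=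
                Finset.sum_congr rfl fun j _ => Finset.sum_congr rfl fun i _ => Finset.sum_comm
            _ = ∑ j ∈ Finset.range (H.nL b), ∑ m ∈ Finset.range (H.nR (H.c2 b j)),
                ∑ i ∈ Finset.range (H.nR a), ∑ t ∈ Finset.range (H.nL (H.d1 a i)),
                H.S (H.c1 (H.d1 a i) t * H.c1 b j) * H.c2 (H.d1 a i) t * H.d1 (H.c2 b j) m *
                  H.S (H.d2 (H.c2 b j) m) * H.S (H.d2 a i) :=
                Finset.sum_congr rfl fun j _ => Finset.sum_comm
      -- second mixed coassociativity, on `b`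
      _ = ∑ j ∈ Finset.range (H.nR b), ∑ m ∈ Finset.range (H.nL (H.d1 b j)),
          ∑ i ∈ Finset.range (H.nR a), ∑ t ∈ Finset.range (H.nL (H.d1 a i)),
          H.S (H.c1 (H.d1 a i) t * H.c1 (H.d1 b j) m) * H.c2 (H.d1 a i) t * H.c2 (H.d1 b j) m *
            H.S (H.d2 b j) * H.S (H.d2 a i) := by
          refine (H.mixed₁ (M := A)
            (g := fun y q v => ∑ i ∈ Finset.range (H.nR a), ∑ t ∈ Finset.range (H.nL (H.d1 a i)),
              H.S (H.c1 (H.d1 a i) t * y) * H.c2 (H.d1 a i) t * q * H.S v * H.S (H.d2 a i))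
            ?_ ?_ ?_ ?_ ?_ b).symm
          · intro u u' v w
            show (∑ i ∈ Finset.range (H.nR a), ∑ t ∈ Finset.range (H.nL (H.d1 a i)),
              H.S (H.c1 (H.d1 a i) t * (u + u')) * H.c2 (H.d1 a i) t * v * H.S w * H.S (H.d2 a i)) = _
            simp only [mul_add, H.S_add, add_mul, Finset.sum_add_distrib]
          · intro u v v' w
            show (∑ i ∈ Finset.range (H.nR a), ∑ t ∈ Finset.range (H.nL (H.d1 a i)),
              H.S (H.c1 (H.d1 a i) t * u) * H.c2 (H.d1 a i) t * (v + v') * H.S w * H.S (H.d2 a i)) = _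
            simp only [mul_add, add_mul, Finset.sum_add_distrib]
          · intro u v w w'
            show (∑ i ∈ Finset.range (H.nR a), ∑ t ∈ Finset.range (H.nL (H.d1 a i)),
              H.S (H.c1 (H.d1 a i) t * u) * H.c2 (H.d1 a i) t * v * H.S (w + w') * H.S (H.d2 a i)) = _
            simp only [H.S_add, mul_add, add_mul, Finset.sum_add_distrib]
          · intro l u v w
            refine Finset.sum_congr rfl fun i _ => ?_
            have htakL := H.comulL_takeuchi (M := A)
              (f := fun p c => H.S (p * u) * c * v * H.S w * H.S (H.d2 a i))
              (by intro p p' c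
                  show H.S ((p + p') * u) * c * v * H.S w * H.S (H.d2 a i) = _
                  simp only [add_mul, H.S_add])
              (by intro p c c'
                  show H.S (p * u) * (c + c') * v * H.S w * H.S (H.d2 a i) = _
                  simp only [mul_add, add_mul])
              (by intro ν p c
                  show H.S (H.tL ν * p * u) * c * v * H.S w * H.S (H.d2 a i)
                    = H.S (p * u) * (H.sL ν * c) * v * H.S w * H.S (H.d2 a i)
                  rw [mul_assoc (H.tL ν) p u, H.S_tL_left]
                  simp only [mul_assoc])
              l (H.d1 a i)
            calc (∑ t ∈ Finset.range (H.nL (H.d1 a i)),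
                H.S (H.c1 (H.d1 a i) t * (H.tL l * u)) * H.c2 (H.d1 a i) t * v *
                  H.S w * H.S (H.d2 a i))
                = ∑ t ∈ Finset.range (H.nL (H.d1 a i)),
                  H.S (H.c1 (H.d1 a i) t * H.tL l * u) * H.c2 (H.d1 a i) t * v *
                    H.S w * H.S (H.d2 a i) :=
                  Finset.sum_congr rfl fun t _ => by
                    rw [← mul_assoc (H.c1 (H.d1 a i) t) (H.tL l) u]
              _ = ∑ t ∈ Finset.range (H.nL (H.d1 a i)),
                  H.S (H.c1 (H.d1 a i) t * u) * (H.c2 (H.d1 a i) t * H.sL l) * v *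
                    H.S w * H.S (H.d2 a i) := htakL
              _ = ∑ t ∈ Finset.range (H.nL (H.d1 a i)),
                  H.S (H.c1 (H.d1 a i) t * u) * H.c2 (H.d1 a i) t * (H.sL l * v) *
                    H.S w * H.S (H.d2 a i) :=
                  Finset.sum_congr rfl fun t _ => by simp only [mul_assoc]
          · intro r u v w
            refine Finset.sum_congr rfl fun i _ => Finset.sum_congr rfl fun t _ => ?_
            show H.S (H.c1 (H.d1 a i) t * u) * H.c2 (H.d1 a i) t * (v * H.sR r) *
                H.S w * H.S (H.d2 a i)
              = H.S (H.c1 (H.d1 a i) t * u) * H.c2 (H.d1 a i) t * v *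
                H.S (w * H.tR r) * H.S (H.d2 a i)
            rw [H.S_tR_right]; simp only [mul_assoc]
      -- reorder back
      _ = ∑ i ∈ Finset.range (H.nR a), ∑ j ∈ Finset.range (H.nR b),
          ∑ t ∈ Finset.range (H.nL (H.d1 a i)), ∑ m ∈ Finset.range (H.nL (H.d1 b j)),
          H.S (H.c1 (H.d1 a i) t * H.c1 (H.d1 b j) m) * H.c2 (H.d1 a i) t * H.c2 (H.d1 b j) m *
            H.S (H.d2 b j) * H.S (H.d2 a i) := by
          calc (∑ j ∈ Finset.range (H.nR b), ∑ m ∈ Finset.range (H.nL (H.d1 b j)),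
            ∑ i ∈ Finset.range (H.nR a), ∑ t ∈ Finset.range (H.nL (H.d1 a i)),
            H.S (H.c1 (H.d1 a i) t * H.c1 (H.d1 b j) m) * H.c2 (H.d1 a i) t * H.c2 (H.d1 b j) m *
              H.S (H.d2 b j) * H.S (H.d2 a i))
              = ∑ j ∈ Finset.range (H.nR b), ∑ i ∈ Finset.range (H.nR a),
                ∑ m ∈ Finset.range (H.nL (H.d1 b j)), ∑ t ∈ Finset.range (H.nL (H.d1 a i)),
                H.S (H.c1 (H.d1 a i) t * H.c1 (H.d1 b j) m) * H.c2 (H.d1 a i) t * H.c2 (H.d1 b j) m *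
                  H.S (H.d2 b j) * H.S (H.d2 a i) :=
                Finset.sum_congr rfl fun j _ => Finset.sum_comm
            _ = ∑ i ∈ Finset.range (H.nR a), ∑ j ∈ Finset.range (H.nR b),
                ∑ m ∈ Finset.range (H.nL (H.d1 b j)), ∑ t ∈ Finset.range (H.nL (H.d1 a i)),
                H.S (H.c1 (H.d1 a i) t * H.c1 (H.d1 b j) m) * H.c2 (H.d1 a i) t * H.c2 (H.d1 b j) m *
                  H.S (H.d2 b j) * H.S (H.d2 a i) := Finset.sum_comm
            _ = ∑ i ∈ Finset.range (H.nR a), ∑ j ∈ Finset.range (H.nR b),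
                ∑ t ∈ Finset.range (H.nL (H.d1 a i)), ∑ m ∈ Finset.range (H.nL (H.d1 b j)),
                H.S (H.c1 (H.d1 a i) t * H.c1 (H.d1 b j) m) * H.c2 (H.d1 a i) t * H.c2 (H.d1 b j) m *
                  H.S (H.d2 b j) * H.S (H.d2 a i) :=
                Finset.sum_congr rfl fun i _ => Finset.sum_congr rfl fun j _ => Finset.sum_comm
      -- collapse the pair of `γ_L` coproducts of `d1 a i` and `d1 b j`
      _ = ∑ i ∈ Finset.range (H.nR a), ∑ j ∈ Finset.range (H.nR b),
          H.sR (H.πR (H.d1 a i * H.d1 b j)) * H.S (H.d2 b j) * H.S (H.d2 a i) := by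
          refine Finset.sum_congr rfl fun i _ => Finset.sum_congr rfl fun j _ => ?_
          have hmul := H.comulL_mul (M := A)
            (f := fun u v => H.S u * v * H.S (H.d2 b j) * H.S (H.d2 a i))
            (by intro u u' v
                show H.S (u + u') * v * H.S (H.d2 b j) * H.S (H.d2 a i) = _
                simp only [H.S_add, add_mul])
            (by intro u v v'
                show H.S u * (v + v') * H.S (H.d2 b j) * H.S (H.d2 a i) = _
                simp only [mul_add, add_mul])
            (by intro l u v
                show H.S (H.tL l * u) * v * H.S (H.d2 b j) * H.S (H.d2 a i)
                  = H.S u * (H.sL l * v) * H.S (H.d2 b j) * H.S (H.d2 a i)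
                rw [H.S_tL_left]; simp only [mul_assoc])
            (H.d1 a i) (H.d1 b j)
          calc (∑ t ∈ Finset.range (H.nL (H.d1 a i)), ∑ m ∈ Finset.range (H.nL (H.d1 b j)),
              H.S (H.c1 (H.d1 a i) t * H.c1 (H.d1 b j) m) * H.c2 (H.d1 a i) t *
                H.c2 (H.d1 b j) m * H.S (H.d2 b j) * H.S (H.d2 a i))
              = ∑ t ∈ Finset.range (H.nL (H.d1 a i)), ∑ m ∈ Finset.range (H.nL (H.d1 b j)),
                H.S (H.c1 (H.d1 a i) t * H.c1 (H.d1 b j) m) *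
                  (H.c2 (H.d1 a i) t * H.c2 (H.d1 b j) m) * H.S (H.d2 b j) * H.S (H.d2 a i) :=
                Finset.sum_congr rfl fun t _ => Finset.sum_congr rfl fun m _ => by
                  simp only [mul_assoc]
            _ = ∑ w ∈ Finset.range (H.nL (H.d1 a i * H.d1 b j)),
                H.S (H.c1 (H.d1 a i * H.d1 b j) w) * H.c2 (H.d1 a i * H.d1 b j) w *
                  H.S (H.d2 b j) * H.S (H.d2 a i) := hmul.symm
            _ = (∑ w ∈ Finset.range (H.nL (H.d1 a i * H.d1 b j)),
                H.S (H.c1 (H.d1 a i * H.d1 b j) w) * H.c2 (H.d1 a i * H.d1 b j) w) *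
                  H.S (H.d2 b j) * H.S (H.d2 a i) := by
                rw [Finset.sum_mul, Finset.sum_mul]
            _ = _ := by rw [H.antipode_L]
      -- use the right counit to produce `S b`
      _ = ∑ i ∈ Finset.range (H.nR a), H.S b * (H.sR (H.πR (H.d1 a i)) * H.S (H.d2 a i)) := by
          refine Finset.sum_congr rfl fun i _ => ?_
          have htakF := H.comulR_takeuchi (M := A)
            (f := fun p q => H.S (q * H.tR (H.πR p)) * H.S (H.d2 a i))
            (by intro p p' q
                show H.S (q * H.tR (H.πR (p + p'))) * H.S (H.d2 a i) = _
                rw [H.πR_add, H.tR_add, mul_add, H.S_add, add_mul])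
            (by intro p q q'
                show H.S ((q + q') * H.tR (H.πR p)) * H.S (H.d2 a i) = _
                rw [add_mul, H.S_add, add_mul])
            (by intro σ p q
                show H.S (q * H.tR (H.πR (p * H.sR σ))) * H.S (H.d2 a i)
                  = H.S (q * H.tR σ * H.tR (H.πR p)) * H.S (H.d2 a i)
                rw [H.tRpiR_sR, mul_assoc])
            (H.πR (H.d1 a i)) b
          calc (∑ j ∈ Finset.range (H.nR b),
              H.sR (H.πR (H.d1 a i * H.d1 b j)) * H.S (H.d2 b j) * H.S (H.d2 a i))
              = ∑ j ∈ Finset.range (H.nR b),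
                H.S (H.d2 b j * H.tR (H.πR (H.sR (H.πR (H.d1 a i)) * H.d1 b j))) *
                  H.S (H.d2 a i) := by
                refine Finset.sum_congr rfl fun j _ => ?_
                rw [← H.πR_lunit (H.d1 a i) (H.d1 b j), ← H.S_tR_right]
            _ = ∑ j ∈ Finset.range (H.nR b),
                H.S (H.tR (H.πR (H.d1 a i)) * H.d2 b j * H.tR (H.πR (H.d1 b j))) *
                  H.S (H.d2 a i) := htakF
            _ = ∑ j ∈ Finset.range (H.nR b),
                H.S (H.d2 b j * H.tR (H.πR (H.d1 b j))) * H.sR (H.πR (H.d1 a i)) *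
                  H.S (H.d2 a i) := by
                refine Finset.sum_congr rfl fun j _ => ?_
                rw [mul_assoc, H.S_tR_left]
            _ = (∑ j ∈ Finset.range (H.nR b),
                H.S (H.d2 b j * H.tR (H.πR (H.d1 b j)))) * H.sR (H.πR (H.d1 a i)) *
                  H.S (H.d2 a i) := by rw [Finset.sum_mul, Finset.sum_mul]
            _ = H.S b * (H.sR (H.πR (H.d1 a i)) * H.S (H.d2 a i)) := by
                rw [← addf_sum H.S H.S_add, H.counitR_right, mul_assoc]
      _ = H.S b * H.S a := by
          rw [← Finset.mul_sum, ← H.S_decompR]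
  rw [← way1, way2]

end HopfAlgebroidData
namespace HopfAlgebroidData

variable {A L R : Type u} [Ring A] [Ring L] [Ring R] (H : HopfAlgebroidData A L R)

theorem Sinv_mul (x y : A) : H.Sinv (x * y) = H.Sinv y * H.Sinv x := by
  apply H.Sinv_eq
  rw [H.S_mul, H.S_rightinv, H.S_rightinv]

/-- `tL (πL w) = ∑ w⁽²⁾ S⁻¹(w⁽¹⁾)`. -/
theorem tLpiL_decomp (w : A) :
    H.tL (H.πL w) = ∑ i ∈ Finset.range (H.nR w), H.d2 w i * H.Sinv (H.d1 w i) := by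
  rw [← H.Sinv_sL (H.πL w), ← H.antipode_R w, addf_sum H.Sinv H.Sinv_add]
  exact Finset.sum_congr rfl fun i _ => by rw [H.Sinv_mul, H.S_leftinv]

/-- `tR (πR w) = ∑ S⁻¹(w₍₂₎) w₍₁₎`. -/
theorem tRpiR_decomp (w : A) :
    H.tR (H.πR w) = ∑ i ∈ Finset.range (H.nL w), H.Sinv (H.c2 w i) * H.c1 w i := by
  rw [← H.Sinv_sR (H.πR w), ← H.antipode_L w, addf_sum H.Sinv H.Sinv_add]
  exact Finset.sum_congr rfl fun i _ => by rw [H.Sinv_mul, H.S_leftinv]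

section Take

variable {M : Type u} [AddCommGroup M]

/-- Takeuchi move across a `γ_R` coproduct, with left prefixes. -/
theorem takeRpre (f : A → A → M)
    (h1 : ∀ u u' v, f (u + u') v = f u v + f u' v)
    (h2 : ∀ u v v', f u (v + v') = f u v + f u v')
    (h3 : ∀ r u v, f (u * H.sR r) v = f u (v * H.tR r)) (σ : R) (z u v : A) :
    (∑ t ∈ Finset.range (H.nR z), f (u * (H.sR σ * H.d1 z t)) (v * H.d2 z t)) =
      ∑ t ∈ Finset.range (H.nR z), f (u * H.d1 z t) (v * (H.tR σ * H.d2 z t)) := by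
  refine H.comulR_takeuchi (M := M) (f := fun p q => f (u * p) (v * q)) ?_ ?_ ?_ σ z
  · intro p p' q; show f (u * (p + p')) (v * q) = _; rw [mul_add, h1]
  · intro p q q'; show f (u * p) (v * (q + q')) = _; rw [mul_add, h2]
  · intro τ p q
    show f (u * (p * H.sR τ)) (v * q) = f (u * p) (v * (q * H.tR τ))
    rw [← mul_assoc, h3, mul_assoc]

/-- Takeuchi move across a `γ_L` coproduct, with right suffixes. -/
theorem takeLpost (f : A → A → M)
    (h1 : ∀ u u' v, f (u + u') v = f u v + f u' v)
    (h2 : ∀ u v v', f u (v + v') = f u v + f u v')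
    (h3 : ∀ l u v, f (H.tL l * u) v = f u (H.sL l * v)) (l : L) (z u v : A) :
    (∑ t ∈ Finset.range (H.nL z), f (H.c1 z t * H.tL l * u) (H.c2 z t * v)) =
      ∑ t ∈ Finset.range (H.nL z), f (H.c1 z t * u) (H.c2 z t * H.sL l * v) := by
  refine H.comulL_takeuchi (M := M) (f := fun p q => f (p * u) (q * v)) ?_ ?_ ?_ l z
  · intro p p' q; show f ((p + p') * u) (q * v) = _; rw [add_mul, h1]
  · intro p q q'; show f (p * u) ((q + q') * v) = _; rw [add_mul, h2]
  · intro ν p q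
    show f (H.tL ν * p * u) (q * v) = f (p * u) (H.sL ν * q * v)
    rw [mul_assoc, h3, mul_assoc]

end Take

end HopfAlgebroidData
namespace HopfAlgebroidData

variable {A L R : Type u} [Ring A] [Ring L] [Ring R] (H : HopfAlgebroidData A L R)

section CCR

variable {M : Type u} [AddCommGroup M]

theorem CCR_wayA (f : A → A → M)
    (h1 : ∀ u u' v, f (u + u') v = f u v + f u' v)
    (h2 : ∀ u v v', f u (v + v') = f u v + f u v')
    (h3 : ∀ r u v, f (u * H.sR r) v = f u (v * H.tR r)) (a : A) :
    (∑ i ∈ Finset.range (H.nL a), ∑ k ∈ Finset.range (H.nR (H.c2 a i)),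
      ∑ j ∈ Finset.range (H.nL (H.c1 a i)),
      ∑ p ∈ Finset.range (H.nR (H.d1 (H.c2 a i) k)),
      ∑ q ∈ Finset.range (H.nR (H.S (H.d2 (H.c2 a i) k))),
      f (H.S (H.c2 (H.c1 a i) j) * H.d1 (H.d1 (H.c2 a i) k) p * H.d1 (H.S (H.d2 (H.c2 a i) k)) q)
        (H.S (H.c1 (H.c1 a i) j) * H.d2 (H.d1 (H.c2 a i) k) p * H.d2 (H.S (H.d2 (H.c2 a i) k)) q))
    = ∑ i ∈ Finset.range (H.nL a), f (H.S (H.c2 a i)) (H.S (H.c1 a i)) := by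
  have hf' : ∀ (X Y : A),
      (∀ u u' v, f (X * (u + u')) (Y * v) = f (X * u) (Y * v) + f (X * u') (Y * v)) ∧
      (∀ u v v', f (X * u) (Y * (v + v')) = f (X * u) (Y * v) + f (X * u) (Y * v')) ∧
      (∀ r u v, f (X * (u * H.sR r)) (Y * v) = f (X * u) (Y * (v * H.tR r))) := by
    intro X Y
    refine ⟨?_, ?_, ?_⟩
    · intro u u' v; rw [mul_add, h1]
    · intro u v v'; rw [mul_add, h2]
    · intro r u v; rw [← mul_assoc, h3, mul_assoc]
  calc (∑ i ∈ Finset.range (H.nL a), ∑ k ∈ Finset.range (H.nR (H.c2 a i)),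
      ∑ j ∈ Finset.range (H.nL (H.c1 a i)),
      ∑ p ∈ Finset.range (H.nR (H.d1 (H.c2 a i) k)),
      ∑ q ∈ Finset.range (H.nR (H.S (H.d2 (H.c2 a i) k))),
      f (H.S (H.c2 (H.c1 a i) j) * H.d1 (H.d1 (H.c2 a i) k) p * H.d1 (H.S (H.d2 (H.c2 a i) k)) q)
        (H.S (H.c1 (H.c1 a i) j) * H.d2 (H.d1 (H.c2 a i) k) p * H.d2 (H.S (H.d2 (H.c2 a i) k)) q))
      = ∑ i ∈ Finset.range (H.nL a), ∑ k ∈ Finset.range (H.nR (H.c2 a i)),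
        ∑ j ∈ Finset.range (H.nL (H.c1 a i)),
        ∑ p ∈ Finset.range (H.nR (H.d1 (H.c2 a i) k)),
        ∑ q ∈ Finset.range (H.nR (H.S (H.d2 (H.c2 a i) k))),
        f (H.S (H.c2 (H.c1 a i) j) *
            (H.d1 (H.d1 (H.c2 a i) k) p * H.d1 (H.S (H.d2 (H.c2 a i) k)) q))
          (H.S (H.c1 (H.c1 a i) j) *
            (H.d2 (H.d1 (H.c2 a i) k) p * H.d2 (H.S (H.d2 (H.c2 a i) k)) q)) := by
        refine Finset.sum_congr rfl fun i _ => Finset.sum_congr rfl fun k _ =>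
          Finset.sum_congr rfl fun j _ => Finset.sum_congr rfl fun p _ =>
          Finset.sum_congr rfl fun q _ => ?_
        rw [mul_assoc, mul_assoc]
    _ = ∑ i ∈ Finset.range (H.nL a), ∑ k ∈ Finset.range (H.nR (H.c2 a i)),
        ∑ j ∈ Finset.range (H.nL (H.c1 a i)),
        ∑ w ∈ Finset.range (H.nR (H.d1 (H.c2 a i) k * H.S (H.d2 (H.c2 a i) k))),
        f (H.S (H.c2 (H.c1 a i) j) * H.d1 (H.d1 (H.c2 a i) k * H.S (H.d2 (H.c2 a i) k)) w)
          (H.S (H.c1 (H.c1 a i) j) * H.d2 (H.d1 (H.c2 a i) k * H.S (H.d2 (H.c2 a i) k)) w) := by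
        refine Finset.sum_congr rfl fun i _ => Finset.sum_congr rfl fun k _ =>
          Finset.sum_congr rfl fun j _ => ?_
        exact (H.comulR_mul (M := M)
          (f := fun u v => f (H.S (H.c2 (H.c1 a i) j) * u) (H.S (H.c1 (H.c1 a i) j) * v))
          (hf' _ _).1 (hf' _ _).2.1 (hf' _ _).2.2 _ _).symm
    _ = ∑ i ∈ Finset.range (H.nL a), ∑ j ∈ Finset.range (H.nL (H.c1 a i)),
        ∑ k ∈ Finset.range (H.nR (H.c2 a i)),
        ∑ w ∈ Finset.range (H.nR (H.d1 (H.c2 a i) k * H.S (H.d2 (H.c2 a i) k))),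
        f (H.S (H.c2 (H.c1 a i) j) * H.d1 (H.d1 (H.c2 a i) k * H.S (H.d2 (H.c2 a i) k)) w)
          (H.S (H.c1 (H.c1 a i) j) * H.d2 (H.d1 (H.c2 a i) k * H.S (H.d2 (H.c2 a i) k)) w) :=
        Finset.sum_congr rfl fun i _ => Finset.sum_comm
    _ = ∑ i ∈ Finset.range (H.nL a), ∑ j ∈ Finset.range (H.nL (H.c1 a i)),
        f (H.S (H.c2 (H.c1 a i) j) * H.sL (H.πL (H.c2 a i))) (H.S (H.c1 (H.c1 a i) j)) := by
        refine Finset.sum_congr rfl fun i _ => Finset.sum_congr rfl fun j _ => ?_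
        have hφ : ∀ z z' : A,
            (∑ w ∈ Finset.range (H.nR (z + z')),
              f (H.S (H.c2 (H.c1 a i) j) * H.d1 (z + z') w)
                (H.S (H.c1 (H.c1 a i) j) * H.d2 (z + z') w)) =
            (∑ w ∈ Finset.range (H.nR z),
              f (H.S (H.c2 (H.c1 a i) j) * H.d1 z w) (H.S (H.c1 (H.c1 a i) j) * H.d2 z w)) +
            (∑ w ∈ Finset.range (H.nR z'),
              f (H.S (H.c2 (H.c1 a i) j) * H.d1 z' w) (H.S (H.c1 (H.c1 a i) j) * H.d2 z' w)) := by
          intro z z'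
          exact H.comulR_add (M := M)
            (f := fun u v => f (H.S (H.c2 (H.c1 a i) j) * u) (H.S (H.c1 (H.c1 a i) j) * v))
            (hf' _ _).1 (hf' _ _).2.1 (hf' _ _).2.2 z z'
        obtain ⟨ρ, hρ⟩ := H.ex_tR_sL (H.πL (H.c2 a i))
        rw [show H.sL (H.πL (H.c2 a i)) = H.tR ρ from hρ.symm]
        refine Eq.trans ((addf_sum (M := A) (N := M)
          (φ := fun z => ∑ w ∈ Finset.range (H.nR z),
            f (H.S (H.c2 (H.c1 a i) j) * H.d1 z w) (H.S (H.c1 (H.c1 a i) j) * H.d2 z w))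
          hφ (H.nR (H.c2 a i))
          (fun k => H.d1 (H.c2 a i) k * H.S (H.d2 (H.c2 a i) k))).symm) ?_
        rw [H.antipode_R (H.c2 a i), ← hρ]
        simpa using H.sumR_tRel (M := M)
          (f := fun u v => f (H.S (H.c2 (H.c1 a i) j) * u) (H.S (H.c1 (H.c1 a i) j) * v))
          (hf' _ _).1 (hf' _ _).2.1 (hf' _ _).2.2 ρ
    _ = ∑ i ∈ Finset.range (H.nL a), ∑ j ∈ Finset.range (H.nL (H.c2 a i)),
        f (H.S (H.c1 (H.c2 a i) j) * H.sL (H.πL (H.c2 (H.c2 a i) j))) (H.S (H.c1 a i)) := by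
        refine H.comulL_coassoc (M := M)
          (g := fun x y w => f (H.S y * H.sL (H.πL w)) (H.S x)) ?_ ?_ ?_ ?_ ?_ a
        · intro u u' v w
          show f (H.S v * H.sL (H.πL w)) (H.S (u + u')) = _
          rw [H.S_add, h2]
        · intro u v v' w
          show f (H.S (v + v') * H.sL (H.πL w)) (H.S u) = _
          rw [H.S_add, add_mul, h1]
        · intro u v w w'
          show f (H.S v * H.sL (H.πL (w + w'))) (H.S u) = _
          rw [H.πL_add, H.sL_add, mul_add, h1]
        · intro l u v w
          show f (H.S v * H.sL (H.πL w)) (H.S (H.tL l * u))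
            = f (H.S (H.sL l * v) * H.sL (H.πL w)) (H.S u)
          obtain ⟨ρ, hρ⟩ := H.ex_tR_sL l
          have hSsL : H.S (H.sL l) = H.sR ρ := by rw [← hρ, H.S_tR]
          rw [H.S_tL_left, H.S_mul (H.sL l) v, hSsL, ← hρ,
            mul_assoc (H.S v) (H.sR ρ), ← H.sL_comm_sR, ← mul_assoc, h3]
        · intro l u v w
          show f (H.S (H.tL l * v) * H.sL (H.πL w)) (H.S u)
            = f (H.S v * H.sL (H.πL (H.sL l * w))) (H.S u)
          rw [H.S_tL_left, H.PL1, mul_assoc]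
    _ = ∑ i ∈ Finset.range (H.nL a), f (H.S (H.c2 a i)) (H.S (H.c1 a i)) := by
        refine Finset.sum_congr rfl fun i _ => ?_
        refine Eq.trans ((addf_sum (M := A) (N := M) (φ := fun u => f u (H.S (H.c1 a i)))
          (fun x y => h1 x y _) (H.nL (H.c2 a i))
          (fun j => H.S (H.c1 (H.c2 a i) j) * H.sL (H.πL (H.c2 (H.c2 a i) j)))).symm) ?_
        rw [← H.S_decompL (H.c2 a i)]

end CCR

end HopfAlgebroidData
namespace HopfAlgebroidData

variable {A L R : Type u} [Ring A] [Ring L] [Ring R] (H : HopfAlgebroidData A L R)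

section CCRB

variable {M : Type u} [AddCommGroup M]

theorem Fbal (f : A → A → M)
    (h1 : ∀ u u' v, f (u + u') v = f u v + f u' v)
    (h2 : ∀ u v v', f u (v + v') = f u v + f u v')
    (h3 : ∀ r u v, f (u * H.sR r) v = f u (v * H.tR r))
    (w u v : A) (σ : R) (e1 e2 : A) :
    (∑ t ∈ Finset.range (H.nR w), f (u * (e1 * H.sR σ) * H.d1 w t) (v * e2 * H.d2 w t)) =
      ∑ t ∈ Finset.range (H.nR w), f (u * e1 * H.d1 w t) (v * (e2 * H.tR σ) * H.d2 w t) := by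
  calc (∑ t ∈ Finset.range (H.nR w), f (u * (e1 * H.sR σ) * H.d1 w t) (v * e2 * H.d2 w t))
      = ∑ t ∈ Finset.range (H.nR w),
        f ((u * e1) * (H.sR σ * H.d1 w t)) ((v * e2) * H.d2 w t) :=
        Finset.sum_congr rfl fun t _ => by simp only [mul_assoc]
    _ = ∑ t ∈ Finset.range (H.nR w),
        f ((u * e1) * H.d1 w t) ((v * e2) * (H.tR σ * H.d2 w t)) :=
        H.takeRpre f h1 h2 h3 σ w (u * e1) (v * e2)
    _ = _ := Finset.sum_congr rfl fun t _ => by simp only [mul_assoc]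

theorem hmBal (f : A → A → M)
    (h1 : ∀ u u' v, f (u + u') v = f u v + f u' v)
    (h2 : ∀ u v v', f u (v + v') = f u v + f u v')
    (h3 : ∀ r u v, f (u * H.sR r) v = f u (v * H.tR r))
    (p q : A) (l : L) (α β : A) :
    (∑ s ∈ Finset.range (H.nR p), ∑ t ∈ Finset.range (H.nR (H.S q)),
       f (H.S β * H.d1 p s * H.d1 (H.S q) t) (H.S (H.tL l * α) * H.d2 p s * H.d2 (H.S q) t)) =
    ∑ s ∈ Finset.range (H.nR p), ∑ t ∈ Finset.range (H.nR (H.S q)),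
       f (H.S (H.sL l * β) * H.d1 p s * H.d1 (H.S q) t) (H.S α * H.d2 p s * H.d2 (H.S q) t) := by
  obtain ⟨ρ, hρ⟩ := H.ex_tR_sL l
  have hSsL : H.S (H.sL l) = H.sR ρ := by rw [← hρ, H.S_tR]
  have htak := H.comulR_takeuchi (M := M)
    (f := fun e1 e2 => ∑ t ∈ Finset.range (H.nR (H.S q)),
      f (H.S β * e1 * H.d1 (H.S q) t) (H.S α * e2 * H.d2 (H.S q) t))
    (by intro e e' e2
        show (∑ t ∈ Finset.range (H.nR (H.S q)),
          f (H.S β * (e + e') * H.d1 (H.S q) t) (H.S α * e2 * H.d2 (H.S q) t)) = _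
        simp only [mul_add, add_mul, h1, Finset.sum_add_distrib])
    (by intro e1 e2 e2'
        show (∑ t ∈ Finset.range (H.nR (H.S q)),
          f (H.S β * e1 * H.d1 (H.S q) t) (H.S α * (e2 + e2') * H.d2 (H.S q) t)) = _
        simp only [mul_add, add_mul, h2, Finset.sum_add_distrib])
    (by intro σ e1 e2
        exact H.Fbal f h1 h2 h3 (H.S q) (H.S β) (H.S α) σ e1 e2)
    ρ p
  calc (∑ s ∈ Finset.range (H.nR p), ∑ t ∈ Finset.range (H.nR (H.S q)),
       f (H.S β * H.d1 p s * H.d1 (H.S q) t) (H.S (H.tL l * α) * H.d2 p s * H.d2 (H.S q) t))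
      = ∑ s ∈ Finset.range (H.nR p), ∑ t ∈ Finset.range (H.nR (H.S q)),
        f (H.S β * H.d1 p s * H.d1 (H.S q) t)
          (H.S α * (H.tR ρ * H.d2 p s) * H.d2 (H.S q) t) := by
        refine Finset.sum_congr rfl fun s _ => Finset.sum_congr rfl fun t _ => ?_
        rw [H.S_tL_left, ← hρ]; simp only [mul_assoc]
    _ = ∑ s ∈ Finset.range (H.nR p), ∑ t ∈ Finset.range (H.nR (H.S q)),
        f (H.S β * (H.sR ρ * H.d1 p s) * H.d1 (H.S q) t)
          (H.S α * H.d2 p s * H.d2 (H.S q) t) := htak.symm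
    _ = _ := by
        refine Finset.sum_congr rfl fun s _ => Finset.sum_congr rfl fun t _ => ?_
        rw [H.S_mul (H.sL l) β, hSsL]; simp only [mul_assoc]

end CCRB

end HopfAlgebroidData
namespace HopfAlgebroidData

variable {A L R : Type u} [Ring A] [Ring L] [Ring R] (H : HopfAlgebroidData A L R)

section CCRB2

variable {M : Type u} [AddCommGroup M]

theorem CCR_wayB (f : A → A → M)
    (h1 : ∀ u u' v, f (u + u') v = f u v + f u' v)
    (h2 : ∀ u v v', f u (v + v') = f u v + f u v')
    (h3 : ∀ r u v, f (u * H.sR r) v = f u (v * H.tR r)) (a : A) :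
    (∑ i ∈ Finset.range (H.nL a), ∑ k ∈ Finset.range (H.nR (H.c2 a i)),
      ∑ j ∈ Finset.range (H.nL (H.c1 a i)),
      ∑ p ∈ Finset.range (H.nR (H.d1 (H.c2 a i) k)),
      ∑ q ∈ Finset.range (H.nR (H.S (H.d2 (H.c2 a i) k))),
      f (H.S (H.c2 (H.c1 a i) j) * H.d1 (H.d1 (H.c2 a i) k) p * H.d1 (H.S (H.d2 (H.c2 a i) k)) q)
        (H.S (H.c1 (H.c1 a i) j) * H.d2 (H.d1 (H.c2 a i) k) p * H.d2 (H.S (H.d2 (H.c2 a i) k)) q))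
    = ∑ w ∈ Finset.range (H.nR (H.S a)), f (H.d1 (H.S a) w) (H.d2 (H.S a) w) := by
  have hF : ∀ (X Y wq : A),
      (∀ e e' e2, (∑ t ∈ Finset.range (H.nR wq), f (X * (e + e') * H.d1 wq t) (Y * e2 * H.d2 wq t)) =
        (∑ t ∈ Finset.range (H.nR wq), f (X * e * H.d1 wq t) (Y * e2 * H.d2 wq t)) +
        (∑ t ∈ Finset.range (H.nR wq), f (X * e' * H.d1 wq t) (Y * e2 * H.d2 wq t))) ∧
      (∀ e1 e2 e2', (∑ t ∈ Finset.range (H.nR wq), f (X * e1 * H.d1 wq t) (Y * (e2 + e2') * H.d2 wq t)) =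
        (∑ t ∈ Finset.range (H.nR wq), f (X * e1 * H.d1 wq t) (Y * e2 * H.d2 wq t)) +
        (∑ t ∈ Finset.range (H.nR wq), f (X * e1 * H.d1 wq t) (Y * e2' * H.d2 wq t))) ∧
      (∀ (σ : R) e1 e2, (∑ t ∈ Finset.range (H.nR wq), f (X * (e1 * H.sR σ) * H.d1 wq t) (Y * e2 * H.d2 wq t)) =
        ∑ t ∈ Finset.range (H.nR wq), f (X * e1 * H.d1 wq t) (Y * (e2 * H.tR σ) * H.d2 wq t)) := by
    intro X Y wq
    refine ⟨?_, ?_, ?_⟩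
    · intro e e' e2; simp only [mul_add, add_mul, h1, Finset.sum_add_distrib]
    · intro e1 e2 e2'; simp only [mul_add, add_mul, h2, Finset.sum_add_distrib]
    · intro σ e1 e2; exact H.Fbal f h1 h2 h3 wq X Y σ e1 e2
  have hK : ∀ (Z1 Z2 : A),
      (∀ g g' g2, f (Z1 * (g + g')) (Z2 * g2) = f (Z1 * g) (Z2 * g2) + f (Z1 * g') (Z2 * g2)) ∧
      (∀ g1 g2 g2', f (Z1 * g1) (Z2 * (g2 + g2')) = f (Z1 * g1) (Z2 * g2) + f (Z1 * g1) (Z2 * g2')) ∧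
      (∀ (σ : R) g1 g2, f (Z1 * (g1 * H.sR σ)) (Z2 * g2) = f (Z1 * g1) (Z2 * (g2 * H.tR σ))) := by
    intro Z1 Z2
    refine ⟨?_, ?_, ?_⟩
    · intro g g' g2; rw [mul_add, h1]
    · intro g1 g2 g2'; rw [mul_add, h2]
    · intro σ g1 g2; rw [← mul_assoc, h3, mul_assoc]
  calc (∑ i ∈ Finset.range (H.nL a), ∑ k ∈ Finset.range (H.nR (H.c2 a i)),
      ∑ j ∈ Finset.range (H.nL (H.c1 a i)),
      ∑ p ∈ Finset.range (H.nR (H.d1 (H.c2 a i) k)),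
      ∑ q ∈ Finset.range (H.nR (H.S (H.d2 (H.c2 a i) k))),
      f (H.S (H.c2 (H.c1 a i) j) * H.d1 (H.d1 (H.c2 a i) k) p * H.d1 (H.S (H.d2 (H.c2 a i) k)) q)
        (H.S (H.c1 (H.c1 a i) j) * H.d2 (H.d1 (H.c2 a i) k) p * H.d2 (H.S (H.d2 (H.c2 a i) k)) q))
      -- first mixed coassociativity
      = ∑ i ∈ Finset.range (H.nR a), ∑ k ∈ Finset.range (H.nL (H.d1 a i)),
        ∑ j ∈ Finset.range (H.nL (H.c1 (H.d1 a i) k)),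
        ∑ s ∈ Finset.range (H.nR (H.c2 (H.d1 a i) k)),
        ∑ t ∈ Finset.range (H.nR (H.S (H.d2 a i))),
        f (H.S (H.c2 (H.c1 (H.d1 a i) k) j) * H.d1 (H.c2 (H.d1 a i) k) s * H.d1 (H.S (H.d2 a i)) t)
          (H.S (H.c1 (H.c1 (H.d1 a i) k) j) * H.d2 (H.c2 (H.d1 a i) k) s * H.d2 (H.S (H.d2 a i)) t) := by
        refine (H.mixed₁ (M := M)
          (g := fun x p q => ∑ j ∈ Finset.range (H.nL x), ∑ s ∈ Finset.range (H.nR p),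
            ∑ t ∈ Finset.range (H.nR (H.S q)),
            f (H.S (H.c2 x j) * H.d1 p s * H.d1 (H.S q) t)
              (H.S (H.c1 x j) * H.d2 p s * H.d2 (H.S q) t))
          ?_ ?_ ?_ ?_ ?_ a).symm
        · -- additivity in x
          intro u u' v w
          exact H.comulL_add (M := M)
            (f := fun α β => ∑ s ∈ Finset.range (H.nR v), ∑ t ∈ Finset.range (H.nR (H.S w)),
              f (H.S β * H.d1 v s * H.d1 (H.S w) t) (H.S α * H.d2 v s * H.d2 (H.S w) t))
            (by intro α α' β
                show (∑ s ∈ Finset.range (H.nR v), ∑ t ∈ Finset.range (H.nR (H.S w)),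
                  f (H.S β * H.d1 v s * H.d1 (H.S w) t)
                    (H.S (α + α') * H.d2 v s * H.d2 (H.S w) t)) = _
                simp only [H.S_add, add_mul, h2, Finset.sum_add_distrib])
            (by intro α β β'
                show (∑ s ∈ Finset.range (H.nR v), ∑ t ∈ Finset.range (H.nR (H.S w)),
                  f (H.S (β + β') * H.d1 v s * H.d1 (H.S w) t)
                    (H.S α * H.d2 v s * H.d2 (H.S w) t)) = _
                simp only [H.S_add, add_mul, h1, Finset.sum_add_distrib])
            (fun l α β => H.hmBal f h1 h2 h3 v w l α β)
            u u'
        · -- additivity in p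
          intro u v v' w
          show (∑ j ∈ Finset.range (H.nL u), ∑ s ∈ Finset.range (H.nR (v + v')),
            ∑ t ∈ Finset.range (H.nR (H.S w)),
            f (H.S (H.c2 u j) * H.d1 (v + v') s * H.d1 (H.S w) t)
              (H.S (H.c1 u j) * H.d2 (v + v') s * H.d2 (H.S w) t)) = _
          rw [← Finset.sum_add_distrib]
          refine Finset.sum_congr rfl fun j _ => ?_
          exact H.comulR_add (M := M)
            (f := fun e1 e2 => ∑ t ∈ Finset.range (H.nR (H.S w)),
              f (H.S (H.c2 u j) * e1 * H.d1 (H.S w) t) (H.S (H.c1 u j) * e2 * H.d2 (H.S w) t))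
            (hF _ _ _).1 (hF _ _ _).2.1 (hF _ _ _).2.2 v v'
        · -- additivity in q
          intro u v w w'
          show (∑ j ∈ Finset.range (H.nL u), ∑ s ∈ Finset.range (H.nR v),
            ∑ t ∈ Finset.range (H.nR (H.S (w + w'))),
            f (H.S (H.c2 u j) * H.d1 v s * H.d1 (H.S (w + w')) t)
              (H.S (H.c1 u j) * H.d2 v s * H.d2 (H.S (w + w')) t)) = _
          rw [← Finset.sum_add_distrib]
          refine Finset.sum_congr rfl fun j _ => ?_
          rw [← Finset.sum_add_distrib]
          refine Finset.sum_congr rfl fun s _ => ?_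
          rw [H.S_add]
          exact H.comulR_add (M := M)
            (f := fun g1 g2 => f (H.S (H.c2 u j) * H.d1 v s * g1) (H.S (H.c1 u j) * H.d2 v s * g2))
            (hK _ _).1 (hK _ _).2.1 (hK _ _).2.2 (H.S w) (H.S w')
        · -- tL-balance
          intro l u v w
          obtain ⟨ρ, hρ⟩ := H.ex_tR_sL l
          calc (∑ j ∈ Finset.range (H.nL (H.tL l * u)), ∑ s ∈ Finset.range (H.nR v),
              ∑ t ∈ Finset.range (H.nR (H.S w)),
              f (H.S (H.c2 (H.tL l * u) j) * H.d1 v s * H.d1 (H.S w) t)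
                (H.S (H.c1 (H.tL l * u) j) * H.d2 v s * H.d2 (H.S w) t))
              = ∑ j ∈ Finset.range (H.nL u), ∑ s ∈ Finset.range (H.nR v),
                ∑ t ∈ Finset.range (H.nR (H.S w)),
                f (H.S (H.tL l * H.c2 u j) * H.d1 v s * H.d1 (H.S w) t)
                  (H.S (H.c1 u j) * H.d2 v s * H.d2 (H.S w) t) := by
                exact H.sumL_tLmul (M := M)
                  (f := fun α β => ∑ s ∈ Finset.range (H.nR v),
                    ∑ t ∈ Finset.range (H.nR (H.S w)),
                    f (H.S β * H.d1 v s * H.d1 (H.S w) t) (H.S α * H.d2 v s * H.d2 (H.S w) t))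
                  (by intro α α' β
                      show (∑ s ∈ Finset.range (H.nR v), ∑ t ∈ Finset.range (H.nR (H.S w)),
                        f (H.S β * H.d1 v s * H.d1 (H.S w) t)
                          (H.S (α + α') * H.d2 v s * H.d2 (H.S w) t)) = _
                      simp only [H.S_add, add_mul, h2, Finset.sum_add_distrib])
                  (by intro α β β'
                      show (∑ s ∈ Finset.range (H.nR v), ∑ t ∈ Finset.range (H.nR (H.S w)),
                        f (H.S (β + β') * H.d1 v s * H.d1 (H.S w) t)
                          (H.S α * H.d2 v s * H.d2 (H.S w) t)) = _
                      simp only [H.S_add, add_mul, h1, Finset.sum_add_distrib])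
                  (fun l' α β => H.hmBal f h1 h2 h3 v w l' α β)
                  l u
            _ = ∑ j ∈ Finset.range (H.nL u), ∑ s ∈ Finset.range (H.nR v),
                ∑ t ∈ Finset.range (H.nR (H.S w)),
                f (H.S (H.c2 u j) * (H.tR ρ * H.d1 v s) * H.d1 (H.S w) t)
                  (H.S (H.c1 u j) * H.d2 v s * H.d2 (H.S w) t) := by
                refine Finset.sum_congr rfl fun j _ => Finset.sum_congr rfl fun s _ =>
                  Finset.sum_congr rfl fun t _ => ?_
                rw [H.S_tL_left, ← hρ]; simp only [mul_assoc]
            _ = ∑ j ∈ Finset.range (H.nL u), ∑ s ∈ Finset.range (H.nR (H.tR ρ * v)),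
                ∑ t ∈ Finset.range (H.nR (H.S w)),
                f (H.S (H.c2 u j) * H.d1 (H.tR ρ * v) s * H.d1 (H.S w) t)
                  (H.S (H.c1 u j) * H.d2 (H.tR ρ * v) s * H.d2 (H.S w) t) := by
                refine Finset.sum_congr rfl fun j _ => ?_
                exact (H.sumR_tRlmul (M := M)
                  (f := fun e1 e2 => ∑ t ∈ Finset.range (H.nR (H.S w)),
                    f (H.S (H.c2 u j) * e1 * H.d1 (H.S w) t)
                      (H.S (H.c1 u j) * e2 * H.d2 (H.S w) t))
                  (hF _ _ _).1 (hF _ _ _).2.1 (hF _ _ _).2.2 ρ v).symm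
            _ = _ := by rw [hρ]
        · -- sR-balance
          intro r u v w
          refine Finset.sum_congr rfl fun j _ => ?_
          calc (∑ s ∈ Finset.range (H.nR (v * H.sR r)), ∑ t ∈ Finset.range (H.nR (H.S w)),
              f (H.S (H.c2 u j) * H.d1 (v * H.sR r) s * H.d1 (H.S w) t)
                (H.S (H.c1 u j) * H.d2 (v * H.sR r) s * H.d2 (H.S w) t))
              = ∑ s ∈ Finset.range (H.nR v), ∑ t ∈ Finset.range (H.nR (H.S w)),
                f (H.S (H.c2 u j) * H.d1 v s * H.d1 (H.S w) t)
                  (H.S (H.c1 u j) * (H.d2 v s * H.sR r) * H.d2 (H.S w) t) := by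
                exact H.sumR_mulSR (M := M)
                  (f := fun e1 e2 => ∑ t ∈ Finset.range (H.nR (H.S w)),
                    f (H.S (H.c2 u j) * e1 * H.d1 (H.S w) t)
                      (H.S (H.c1 u j) * e2 * H.d2 (H.S w) t))
                  (hF _ _ _).1 (hF _ _ _).2.1 (hF _ _ _).2.2 v r
            _ = ∑ s ∈ Finset.range (H.nR v), ∑ t ∈ Finset.range (H.nR (H.S w)),
                f (H.S (H.c2 u j) * H.d1 v s * H.d1 (H.S w) t)
                  (H.S (H.c1 u j) * H.d2 v s * (H.sR r * H.d2 (H.S w) t)) := by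
                refine Finset.sum_congr rfl fun s _ => Finset.sum_congr rfl fun t _ => ?_
                simp only [mul_assoc]
            _ = ∑ s ∈ Finset.range (H.nR v), ∑ t ∈ Finset.range (H.nR (H.sR r * H.S w)),
                f (H.S (H.c2 u j) * H.d1 v s * H.d1 (H.sR r * H.S w) t)
                  (H.S (H.c1 u j) * H.d2 v s * H.d2 (H.sR r * H.S w) t) := by
                refine Finset.sum_congr rfl fun s _ => ?_
                exact (H.sumR_sRlmul (M := M)
                  (f := fun g1 g2 => f (H.S (H.c2 u j) * H.d1 v s * g1)
                    (H.S (H.c1 u j) * H.d2 v s * g2))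
                  (hK _ _).1 (hK _ _).2.1 (hK _ _).2.2 r (H.S w)).symm
            _ = _ := by rw [← H.S_tR_right]
    -- coassociativity on `d1 a i`
    _ = ∑ i ∈ Finset.range (H.nR a), ∑ k ∈ Finset.range (H.nL (H.d1 a i)),
        ∑ j ∈ Finset.range (H.nL (H.c2 (H.d1 a i) k)),
        ∑ s ∈ Finset.range (H.nR (H.c2 (H.c2 (H.d1 a i) k) j)),
        ∑ t ∈ Finset.range (H.nR (H.S (H.d2 a i))),
        f (H.S (H.c1 (H.c2 (H.d1 a i) k) j) * H.d1 (H.c2 (H.c2 (H.d1 a i) k) j) s *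
            H.d1 (H.S (H.d2 a i)) t)
          (H.S (H.c1 (H.d1 a i) k) * H.d2 (H.c2 (H.c2 (H.d1 a i) k) j) s *
            H.d2 (H.S (H.d2 a i)) t) := by
        refine Finset.sum_congr rfl fun i _ => ?_
        refine H.comulL_coassoc (M := M)
          (g := fun x1 y w => ∑ s ∈ Finset.range (H.nR w),
            ∑ t ∈ Finset.range (H.nR (H.S (H.d2 a i))),
            f (H.S y * H.d1 w s * H.d1 (H.S (H.d2 a i)) t)
              (H.S x1 * H.d2 w s * H.d2 (H.S (H.d2 a i)) t))
          ?_ ?_ ?_ ?_ ?_ (H.d1 a i)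
        · intro u u' v w
          show (∑ s ∈ Finset.range (H.nR w), ∑ t ∈ Finset.range (H.nR (H.S (H.d2 a i))),
            f (H.S v * H.d1 w s * H.d1 (H.S (H.d2 a i)) t)
              (H.S (u + u') * H.d2 w s * H.d2 (H.S (H.d2 a i)) t)) = _
          simp only [H.S_add, add_mul, h2, Finset.sum_add_distrib]
        · intro u v v' w
          show (∑ s ∈ Finset.range (H.nR w), ∑ t ∈ Finset.range (H.nR (H.S (H.d2 a i))),
            f (H.S (v + v') * H.d1 w s * H.d1 (H.S (H.d2 a i)) t)
              (H.S u * H.d2 w s * H.d2 (H.S (H.d2 a i)) t)) = _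
          simp only [H.S_add, add_mul, h1, Finset.sum_add_distrib]
        · intro u v w w'
          show (∑ s ∈ Finset.range (H.nR (w + w')), ∑ t ∈ Finset.range (H.nR (H.S (H.d2 a i))),
            f (H.S v * H.d1 (w + w') s * H.d1 (H.S (H.d2 a i)) t)
              (H.S u * H.d2 (w + w') s * H.d2 (H.S (H.d2 a i)) t)) = _
          exact H.comulR_add (M := M)
            (f := fun e1 e2 => ∑ t ∈ Finset.range (H.nR (H.S (H.d2 a i))),
              f (H.S v * e1 * H.d1 (H.S (H.d2 a i)) t) (H.S u * e2 * H.d2 (H.S (H.d2 a i)) t))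
            (hF _ _ _).1 (hF _ _ _).2.1 (hF _ _ _).2.2 w w'
        · intro l u v w
          exact H.hmBal f h1 h2 h3 w (H.d2 a i) l u v
        · intro l u v w
          obtain ⟨ρ, hρ⟩ := H.ex_tR_sL l
          calc (∑ s ∈ Finset.range (H.nR w), ∑ t ∈ Finset.range (H.nR (H.S (H.d2 a i))),
              f (H.S (H.tL l * v) * H.d1 w s * H.d1 (H.S (H.d2 a i)) t)
                (H.S u * H.d2 w s * H.d2 (H.S (H.d2 a i)) t))
              = ∑ s ∈ Finset.range (H.nR w), ∑ t ∈ Finset.range (H.nR (H.S (H.d2 a i))),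
                f (H.S v * (H.tR ρ * H.d1 w s) * H.d1 (H.S (H.d2 a i)) t)
                  (H.S u * H.d2 w s * H.d2 (H.S (H.d2 a i)) t) := by
                refine Finset.sum_congr rfl fun s _ => Finset.sum_congr rfl fun t _ => ?_
                rw [H.S_tL_left, ← hρ]; simp only [mul_assoc]
            _ = ∑ s ∈ Finset.range (H.nR (H.tR ρ * w)),
                ∑ t ∈ Finset.range (H.nR (H.S (H.d2 a i))),
                f (H.S v * H.d1 (H.tR ρ * w) s * H.d1 (H.S (H.d2 a i)) t)
                  (H.S u * H.d2 (H.tR ρ * w) s * H.d2 (H.S (H.d2 a i)) t) :=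
                (H.sumR_tRlmul (M := M)
                  (f := fun e1 e2 => ∑ t ∈ Finset.range (H.nR (H.S (H.d2 a i))),
                    f (H.S v * e1 * H.d1 (H.S (H.d2 a i)) t)
                      (H.S u * e2 * H.d2 (H.S (H.d2 a i)) t))
                  (hF _ _ _).1 (hF _ _ _).2.1 (hF _ _ _).2.2 ρ w).symm
            _ = _ := by rw [hρ]
    -- second mixed coassociativity
    _ = ∑ i ∈ Finset.range (H.nR a), ∑ k ∈ Finset.range (H.nL (H.d1 a i)),
        ∑ s ∈ Finset.range (H.nR (H.c2 (H.d1 a i) k)),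
        ∑ j ∈ Finset.range (H.nL (H.d1 (H.c2 (H.d1 a i) k) s)),
        ∑ t ∈ Finset.range (H.nR (H.S (H.d2 a i))),
        f (H.S (H.c1 (H.d1 (H.c2 (H.d1 a i) k) s) j) * H.c2 (H.d1 (H.c2 (H.d1 a i) k) s) j *
            H.d1 (H.S (H.d2 a i)) t)
          (H.S (H.c1 (H.d1 a i) k) * H.d2 (H.c2 (H.d1 a i) k) s *
            H.d2 (H.S (H.d2 a i)) t) := by
        refine Finset.sum_congr rfl fun i _ => Finset.sum_congr rfl fun k _ => ?_
        refine (H.mixed₁ (M := M)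
          (g := fun y u1 u2 => ∑ t ∈ Finset.range (H.nR (H.S (H.d2 a i))),
            f (H.S y * u1 * H.d1 (H.S (H.d2 a i)) t)
              (H.S (H.c1 (H.d1 a i) k) * u2 * H.d2 (H.S (H.d2 a i)) t))
          ?_ ?_ ?_ ?_ ?_ (H.c2 (H.d1 a i) k)).symm
        · intro u u' v w
          show (∑ t ∈ Finset.range (H.nR (H.S (H.d2 a i))),
            f (H.S (u + u') * v * H.d1 (H.S (H.d2 a i)) t)
              (H.S (H.c1 (H.d1 a i) k) * w * H.d2 (H.S (H.d2 a i)) t)) = _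
          simp only [H.S_add, add_mul, h1, Finset.sum_add_distrib]
        · intro u v v' w
          show (∑ t ∈ Finset.range (H.nR (H.S (H.d2 a i))),
            f (H.S u * (v + v') * H.d1 (H.S (H.d2 a i)) t)
              (H.S (H.c1 (H.d1 a i) k) * w * H.d2 (H.S (H.d2 a i)) t)) = _
          simp only [mul_add, add_mul, h1, Finset.sum_add_distrib]
        · intro u v w w'
          show (∑ t ∈ Finset.range (H.nR (H.S (H.d2 a i))),
            f (H.S u * v * H.d1 (H.S (H.d2 a i)) t)
              (H.S (H.c1 (H.d1 a i) k) * (w + w') * H.d2 (H.S (H.d2 a i)) t)) = _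
          simp only [mul_add, add_mul, h2, Finset.sum_add_distrib]
        · intro l u v w
          refine Finset.sum_congr rfl fun t _ => ?_
          show f (H.S (H.tL l * u) * v * H.d1 (H.S (H.d2 a i)) t)
              (H.S (H.c1 (H.d1 a i) k) * w * H.d2 (H.S (H.d2 a i)) t)
            = f (H.S u * (H.sL l * v) * H.d1 (H.S (H.d2 a i)) t)
              (H.S (H.c1 (H.d1 a i) k) * w * H.d2 (H.S (H.d2 a i)) t)
          rw [H.S_tL_left]; simp only [mul_assoc]
        · intro r u v w
          show (∑ t ∈ Finset.range (H.nR (H.S (H.d2 a i))),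
            f (H.S u * (v * H.sR r) * H.d1 (H.S (H.d2 a i)) t)
              (H.S (H.c1 (H.d1 a i) k) * w * H.d2 (H.S (H.d2 a i)) t)) = _
          exact H.Fbal f h1 h2 h3 (H.S (H.d2 a i)) (H.S u) (H.S (H.c1 (H.d1 a i) k)) r v w
    -- swap the two inner summations
    _ = ∑ i ∈ Finset.range (H.nR a), ∑ k ∈ Finset.range (H.nL (H.d1 a i)),
        ∑ s ∈ Finset.range (H.nR (H.c2 (H.d1 a i) k)),
        ∑ t ∈ Finset.range (H.nR (H.S (H.d2 a i))),
        ∑ j ∈ Finset.range (H.nL (H.d1 (H.c2 (H.d1 a i) k) s)),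
        f (H.S (H.c1 (H.d1 (H.c2 (H.d1 a i) k) s) j) * H.c2 (H.d1 (H.c2 (H.d1 a i) k) s) j *
            H.d1 (H.S (H.d2 a i)) t)
          (H.S (H.c1 (H.d1 a i) k) * H.d2 (H.c2 (H.d1 a i) k) s *
            H.d2 (H.S (H.d2 a i)) t) :=
        Finset.sum_congr rfl fun i _ => Finset.sum_congr rfl fun k _ =>
          Finset.sum_congr rfl fun s _ => Finset.sum_comm
    -- collapse the `γ_L (d1 (c2 (d1 a i) k) s)` sum with the antipode axiom
    _ = ∑ i ∈ Finset.range (H.nR a), ∑ k ∈ Finset.range (H.nL (H.d1 a i)),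
        ∑ s ∈ Finset.range (H.nR (H.c2 (H.d1 a i) k)),
        ∑ t ∈ Finset.range (H.nR (H.S (H.d2 a i))),
        f (H.sR (H.πR (H.d1 (H.c2 (H.d1 a i) k) s)) * H.d1 (H.S (H.d2 a i)) t)
          (H.S (H.c1 (H.d1 a i) k) * H.d2 (H.c2 (H.d1 a i) k) s *
            H.d2 (H.S (H.d2 a i)) t) := by
        refine Finset.sum_congr rfl fun i _ => Finset.sum_congr rfl fun k _ =>
          Finset.sum_congr rfl fun s _ => Finset.sum_congr rfl fun t _ => ?_
        refine Eq.trans ((addf_sum (M := A) (N := M)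
          (φ := fun z => f (z * H.d1 (H.S (H.d2 a i)) t)
            (H.S (H.c1 (H.d1 a i) k) * H.d2 (H.c2 (H.d1 a i) k) s * H.d2 (H.S (H.d2 a i)) t))
          (by intro x y; simp only [add_mul, h1])
          (H.nL (H.d1 (H.c2 (H.d1 a i) k) s))
          (fun j => H.S (H.c1 (H.d1 (H.c2 (H.d1 a i) k) s) j) *
            H.c2 (H.d1 (H.c2 (H.d1 a i) k) s) j)).symm) ?_
        rw [H.antipode_L (H.d1 (H.c2 (H.d1 a i) k) s)]
    -- move `sR (πR ...)` across with the Takeuchi axiom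
    _ = ∑ i ∈ Finset.range (H.nR a), ∑ k ∈ Finset.range (H.nL (H.d1 a i)),
        ∑ s ∈ Finset.range (H.nR (H.c2 (H.d1 a i) k)),
        ∑ t ∈ Finset.range (H.nR (H.S (H.d2 a i))),
        f (H.d1 (H.S (H.d2 a i)) t)
          (H.S (H.c1 (H.d1 a i) k) *
            (H.d2 (H.c2 (H.d1 a i) k) s * H.tR (H.πR (H.d1 (H.c2 (H.d1 a i) k) s))) *
            H.d2 (H.S (H.d2 a i)) t) := by
        refine Finset.sum_congr rfl fun i _ => Finset.sum_congr rfl fun k _ =>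
          Finset.sum_congr rfl fun s _ => ?_
        have htak := H.comulR_takeuchi (M := M)
          (f := fun g1 g2 => f g1
            (H.S (H.c1 (H.d1 a i) k) * H.d2 (H.c2 (H.d1 a i) k) s * g2))
          (by intro g g' g2; simp only [h1])
          (by intro g1 g2 g2'; simp only [mul_add, h2])
          (by intro σ g1 g2
              show f (g1 * H.sR σ) (H.S (H.c1 (H.d1 a i) k) * H.d2 (H.c2 (H.d1 a i) k) s * g2)
                = f g1 (H.S (H.c1 (H.d1 a i) k) * H.d2 (H.c2 (H.d1 a i) k) s * (g2 * H.tR σ))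
              rw [h3]; simp only [mul_assoc])
          (H.πR (H.d1 (H.c2 (H.d1 a i) k) s)) (H.S (H.d2 a i))
        refine htak.trans ?_
        refine Finset.sum_congr rfl fun t _ => ?_
        simp only [mul_assoc]
    -- swap, then collapse with the right counit
    _ = ∑ i ∈ Finset.range (H.nR a), ∑ k ∈ Finset.range (H.nL (H.d1 a i)),
        ∑ t ∈ Finset.range (H.nR (H.S (H.d2 a i))),
        f (H.d1 (H.S (H.d2 a i)) t)
          (H.S (H.c1 (H.d1 a i) k) * H.c2 (H.d1 a i) k * H.d2 (H.S (H.d2 a i)) t) := by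
        refine Finset.sum_congr rfl fun i _ => Finset.sum_congr rfl fun k _ => ?_
        refine Finset.sum_comm.trans ?_
        refine Finset.sum_congr rfl fun t _ => ?_
        refine Eq.trans ((addf_sum (M := A) (N := M)
          (φ := fun z => f (H.d1 (H.S (H.d2 a i)) t)
            (H.S (H.c1 (H.d1 a i) k) * z * H.d2 (H.S (H.d2 a i)) t))
          (by intro x y; simp only [mul_add, add_mul, h2])
          (H.nR (H.c2 (H.d1 a i) k))
          (fun s => H.d2 (H.c2 (H.d1 a i) k) s * H.tR (H.πR (H.d1 (H.c2 (H.d1 a i) k) s)))).symm) ?_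
        rw [H.counitR_right (H.c2 (H.d1 a i) k)]
    -- swap, then collapse with the antipode axiom again
    _ = ∑ i ∈ Finset.range (H.nR a), ∑ t ∈ Finset.range (H.nR (H.S (H.d2 a i))),
        f (H.d1 (H.S (H.d2 a i)) t)
          (H.sR (H.πR (H.d1 a i)) * H.d2 (H.S (H.d2 a i)) t) := by
        refine Finset.sum_congr rfl fun i _ => ?_
        refine Finset.sum_comm.trans ?_
        refine Finset.sum_congr rfl fun t _ => ?_
        refine Eq.trans ((addf_sum (M := A) (N := M)
          (φ := fun z => f (H.d1 (H.S (H.d2 a i)) t) (z * H.d2 (H.S (H.d2 a i)) t))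
          (by intro x y; simp only [add_mul, h2])
          (H.nL (H.d1 a i))
          (fun k => H.S (H.c1 (H.d1 a i) k) * H.c2 (H.d1 a i) k)).symm) ?_
        rw [H.antipode_L (H.d1 a i)]
    -- absorb and use the right counit
    _ = ∑ w ∈ Finset.range (H.nR (H.S a)), f (H.d1 (H.S a) w) (H.d2 (H.S a) w) := by
        have hΦ : ∀ x y : A,
            (∑ w ∈ Finset.range (H.nR (H.S (x + y))), f (H.d1 (H.S (x + y)) w) (H.d2 (H.S (x + y)) w)) =
            (∑ w ∈ Finset.range (H.nR (H.S x)), f (H.d1 (H.S x) w) (H.d2 (H.S x) w)) +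
            (∑ w ∈ Finset.range (H.nR (H.S y)), f (H.d1 (H.S y) w) (H.d2 (H.S y) w)) := by
          intro x y
          rw [H.S_add]
          exact H.comulR_add f h1 h2 h3 _ _
        calc (∑ i ∈ Finset.range (H.nR a), ∑ t ∈ Finset.range (H.nR (H.S (H.d2 a i))),
            f (H.d1 (H.S (H.d2 a i)) t) (H.sR (H.πR (H.d1 a i)) * H.d2 (H.S (H.d2 a i)) t))
            = ∑ i ∈ Finset.range (H.nR a),
              ∑ t ∈ Finset.range (H.nR (H.S (H.d2 a i * H.tR (H.πR (H.d1 a i))))),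
              f (H.d1 (H.S (H.d2 a i * H.tR (H.πR (H.d1 a i)))) t)
                (H.d2 (H.S (H.d2 a i * H.tR (H.πR (H.d1 a i)))) t) := by
              refine Finset.sum_congr rfl fun i _ => ?_
              refine Eq.trans ((H.sumR_sRlmul f h1 h2 h3 (H.πR (H.d1 a i)) (H.S (H.d2 a i))).symm) ?_
              rw [← H.S_tR_right]
          _ = ∑ w ∈ Finset.range (H.nR (H.S (∑ i ∈ Finset.range (H.nR a),
                H.d2 a i * H.tR (H.πR (H.d1 a i))))),
              f (H.d1 (H.S (∑ i ∈ Finset.range (H.nR a), H.d2 a i * H.tR (H.πR (H.d1 a i)))) w)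
                (H.d2 (H.S (∑ i ∈ Finset.range (H.nR a), H.d2 a i * H.tR (H.πR (H.d1 a i)))) w) :=
              ((addf_sum (M := A) (N := M)
                (φ := fun z => ∑ w ∈ Finset.range (H.nR (H.S z)),
                  f (H.d1 (H.S z) w) (H.d2 (H.S z) w))
                hΦ (H.nR a) (fun i => H.d2 a i * H.tR (H.πR (H.d1 a i)))).symm)
          _ = _ := by rw [H.counitR_right a]

end CCRB2

end HopfAlgebroidData
namespace HopfAlgebroidData

variable {A L R : Type u} [Ring A] [Ring L] [Ring R] (H : HopfAlgebroidData A L R)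

/-- `γ_R ∘ S = (S ⊗ S) ∘ flip ∘ γ_L`, evaluated on balanced maps. -/
theorem CCR {M : Type u} [AddCommGroup M] (f : A → A → M)
    (h1 : ∀ u u' v, f (u + u') v = f u v + f u' v)
    (h2 : ∀ u v v', f u (v + v') = f u v + f u v')
    (h3 : ∀ r u v, f (u * H.sR r) v = f u (v * H.tR r)) (a : A) :
    (∑ w ∈ Finset.range (H.nR (H.S a)), f (H.d1 (H.S a) w) (H.d2 (H.S a) w)) =
      ∑ i ∈ Finset.range (H.nL a), f (H.S (H.c2 a i)) (H.S (H.c1 a i)) :=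
  (H.CCR_wayB f h1 h2 h3 a).symm.trans (H.CCR_wayA f h1 h2 h3 a)

/-- `(X)`: `tL (πL (S a)) = sR (πR a)`. -/
theorem tLpiL_S (a : A) : H.tL (H.πL (H.S a)) = H.sR (H.πR a) := by
  have h := H.CCR (M := A) (f := fun u v => v * H.Sinv u)
    (by intro u u' v; show v * H.Sinv (u + u') = _; rw [H.Sinv_add, mul_add])
    (by intro u v v'; show (v + v') * H.Sinv u = _; rw [add_mul])
    (by intro r u v
        show v * H.Sinv (u * H.sR r) = (v * H.tR r) * H.Sinv u
        rw [H.Sinv_sR_right, mul_assoc])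
    a
  rw [H.tLpiL_decomp (H.S a), ← H.antipode_L a]
  refine h.trans ?_
  refine Finset.sum_congr rfl fun i _ => ?_
  show H.S (H.c1 a i) * H.Sinv (H.S (H.c2 a i)) = H.S (H.c1 a i) * H.c2 a i
  rw [H.S_leftinv]

end HopfAlgebroidData
namespace HopfAlgebroidData

open MulOpposite

variable {A L R : Type u} [Ring A] [Ring L] [Ring R] (H : HopfAlgebroidData A L R)

/-- The opposite Hopf algebroid: total ring `Aᵐᵒᵖ`, with the two bialgebroid structures

swapped (and their legs flipped). -/
def opp (H : HopfAlgebroidData A L R) : HopfAlgebroidData Aᵐᵒᵖ Rᵐᵒᵖ Lᵐᵒᵖ where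
  sL l := op (H.sR l.unop)
  tL l := op (H.tR l.unop)
  sR r := op (H.sL r.unop)
  tR r := op (H.tL r.unop)
  sL_one := by simp [H.sR_one]
  sL_add x y := by simp [H.sR_add]
  sL_mul x y := by
    apply unop_injective; simp [H.sR_mul]
  tL_one := by simp [H.tR_one]
  tL_add x y := by simp [H.tR_add]
  tL_mul x y := by
    apply unop_injective; simp [H.tR_mul]
  sR_one := by simp [H.sL_one]
  sR_add x y := by simp [H.sL_add]
  sR_mul x y := by
    apply unop_injective; simp [H.sL_mul]
  tR_one := by simp [H.tL_one]
  tR_add x y := by simp [H.tL_add]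
  tR_mul x y := by
    apply unop_injective; simp [H.tL_mul]
  commL l l' := by
    apply unop_injective; simpa using (H.commR l.unop l'.unop).symm
  commR r r' := by
    apply unop_injective; simpa using (H.commL r.unop r'.unop).symm
  nL x := H.nR x.unop
  c1 x j := op (H.d2 x.unop j)
  c2 x j := op (H.d1 x.unop j)
  πL x := op (H.πR x.unop)
  nR x := H.nL x.unop
  d1 x j := op (H.c2 x.unop j)
  d2 x j := op (H.c1 x.unop j)
  πR x := op (H.πL x.unop)
  S x := op (H.S x.unop)
  Sinv x := op (H.Sinv x.unop)
  comulL_add := by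
    intro M _ f h1 h2 h3 a b
    simpa using H.comulR_add (M := M) (f := fun x y => f (op y) (op x))
      (fun u u' v => by simpa using h2 (op v) (op u) (op u'))
      (fun u v v' => by simpa using h1 (op v) (op v') (op u))
      (fun r u v => by simpa using (h3 (op r) (op v) (op u)).symm)
      a.unop b.unop
  comulL_bimod := by
    intro M _ f h1 h2 h3 l l' a
    have key := H.comulR_bimod (M := M) (f := fun x y => f (op y) (op x))
      (fun u u' v => by simpa using h2 (op v) (op u) (op u'))
      (fun u v v' => by simpa using h1 (op v) (op v') (op u))
      (fun r u v => by simpa using (h3 (op r) (op v) (op u)).symm)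
      l'.unop l.unop a.unop
    have he : a.unop * H.sR l.unop * H.tR l'.unop =
        unop (op (H.sR l.unop) * op (H.tR l'.unop) * a) := by
      simp [mul_assoc, H.commR]
    rw [he] at key
    simpa using key
  comulL_coassoc := by
    intro M _ g g1 g2 g3 g4 g5 a
    simpa using (H.comulR_coassoc (M := M) (g := fun x y z => g (op z) (op y) (op x))
      (fun u u' v w => by simpa using g3 (op w) (op v) (op u) (op u'))
      (fun u v v' w => by simpa using g2 (op w) (op v) (op v') (op u))
      (fun u v w w' => by simpa using g1 (op w) (op w') (op v) (op u))
      (fun r u v w => by simpa using (g5 (op r) (op w) (op v) (op u)).symm)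
      (fun r u v w => by simpa using (g4 (op r) (op w) (op v) (op u)).symm)
      a.unop).symm
  comulL_takeuchi := by
    intro M _ f h1 h2 h3 l a
    simpa using (H.comulR_takeuchi (M := M) (f := fun x y => f (op y) (op x))
      (fun u u' v => by simpa using h2 (op v) (op u) (op u'))
      (fun u v v' => by simpa using h1 (op v) (op v') (op u))
      (fun r u v => by simpa using (h3 (op r) (op v) (op u)).symm)
      l.unop a.unop).symm
  comulL_one := by
    intro M _ f h1 h2 h3
    simpa using H.comulR_one (M := M) (f := fun x y => f (op y) (op x))
      (fun u u' v => by simpa using h2 (op v) (op u) (op u'))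
      (fun u v v' => by simpa using h1 (op v) (op v') (op u))
      (fun r u v => by simpa using (h3 (op r) (op v) (op u)).symm)
  comulL_mul := by
    intro M _ f h1 h2 h3 a b
    have key := H.comulR_mul (M := M) (f := fun x y => f (op y) (op x))
      (fun u u' v => by simpa using h2 (op v) (op u) (op u'))
      (fun u v v' => by simpa using h1 (op v) (op v') (op u))
      (fun r u v => by simpa using (h3 (op r) (op v) (op u)).symm)
      b.unop a.unop
    simpa [Finset.sum_comm (s := Finset.range (H.nR b.unop))] using key
  comulR_add := by
    intro M _ f h1 h2 h3 a b
    simpa using H.comulL_add (M := M) (f := fun x y => f (op y) (op x))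
      (fun u u' v => by simpa using h2 (op v) (op u) (op u'))
      (fun u v v' => by simpa using h1 (op v) (op v') (op u))
      (fun l u v => by simpa using (h3 (op l) (op v) (op u)).symm)
      a.unop b.unop
  comulR_bimod := by
    intro M _ f h1 h2 h3 r r' a
    have key := H.comulL_bimod (M := M) (f := fun x y => f (op y) (op x))
      (fun u u' v => by simpa using h2 (op v) (op u) (op u'))
      (fun u v v' => by simpa using h1 (op v) (op v') (op u))
      (fun l u v => by simpa using (h3 (op l) (op v) (op u)).symm)
      r'.unop r.unop a.unop
    have he : H.sL r'.unop * H.tL r.unop * a.unop =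
        unop (a * op (H.sL r'.unop) * op (H.tL r.unop)) := by
      simp [mul_assoc, H.commL r'.unop r.unop]
    rw [he] at key
    simpa using key
  comulR_coassoc := by
    intro M _ g g1 g2 g3 g4 g5 a
    simpa using (H.comulL_coassoc (M := M) (g := fun x y z => g (op z) (op y) (op x))
      (fun u u' v w => by simpa using g3 (op w) (op v) (op u) (op u'))
      (fun u v v' w => by simpa using g2 (op w) (op v) (op v') (op u))
      (fun u v w w' => by simpa using g1 (op w) (op w') (op v) (op u))
      (fun l u v w => by simpa using (g5 (op l) (op w) (op v) (op u)).symm)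
      (fun l u v w => by simpa using (g4 (op l) (op w) (op v) (op u)).symm)
      a.unop).symm
  comulR_takeuchi := by
    intro M _ f h1 h2 h3 r a
    simpa using (H.comulL_takeuchi (M := M) (f := fun x y => f (op y) (op x))
      (fun u u' v => by simpa using h2 (op v) (op u) (op u'))
      (fun u v v' => by simpa using h1 (op v) (op v') (op u))
      (fun l u v => by simpa using (h3 (op l) (op v) (op u)).symm)
      r.unop a.unop).symm
  comulR_one := by
    intro M _ f h1 h2 h3
    simpa using H.comulL_one (M := M) (f := fun x y => f (op y) (op x))
      (fun u u' v => by simpa using h2 (op v) (op u) (op u'))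
      (fun u v v' => by simpa using h1 (op v) (op v') (op u))
      (fun l u v => by simpa using (h3 (op l) (op v) (op u)).symm)
  comulR_mul := by
    intro M _ f h1 h2 h3 a b
    have key := H.comulL_mul (M := M) (f := fun x y => f (op y) (op x))
      (fun u u' v => by simpa using h2 (op v) (op u) (op u'))
      (fun u v v' => by simpa using h1 (op v) (op v') (op u))
      (fun l u v => by simpa using (h3 (op l) (op v) (op u)).symm)
      b.unop a.unop
    simpa [Finset.sum_comm (s := Finset.range (H.nL b.unop))] using key
  πL_one := by simp [H.πR_one]
  πL_add a b := by simp [H.πR_add]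
  counitL_left a := by
    apply unop_injective
    simpa using H.counitR_left a.unop
  counitL_right a := by
    apply unop_injective
    simpa using H.counitR_right a.unop
  πL_runit a b := by
    apply unop_injective
    simpa using H.πR_lunit b.unop a.unop
  πL_runit' a b := by
    apply unop_injective
    simpa using H.πR_lunit' b.unop a.unop
  πR_one := by simp [H.πL_one]
  πR_add a b := by simp [H.πL_add]
  counitR_left a := by
    apply unop_injective
    simpa using H.counitL_left a.unop
  counitR_right a := by
    apply unop_injective
    simpa using H.counitL_right a.unop
  πR_lunit a b := by
    apply unop_injective
    simpa using H.πL_runit b.unop a.unop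
  πR_lunit' a b := by
    apply unop_injective
    simpa using H.πL_runit' b.unop a.unop
  range_sL_tR := by
    ext x
    constructor
    · rintro ⟨l, rfl⟩
      obtain ⟨l', hl'⟩ := H.ex_tL_sR l.unop
      exact ⟨MulOpposite.op l', by simp [hl']⟩
    · rintro ⟨r, rfl⟩
      obtain ⟨r', hr'⟩ := H.ex_sR_tL r.unop
      exact ⟨MulOpposite.op r', by simp [hr']⟩
  range_tL_sR := by
    ext x
    constructor
    · rintro ⟨l, rfl⟩
      obtain ⟨r', hr'⟩ := by
        have : H.tR l.unop ∈ Set.range H.sL := by rw [H.range_sL_tR]; exact ⟨l.unop, rfl⟩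
        exact this
      exact ⟨MulOpposite.op r', by simp [hr']⟩
    · rintro ⟨r, rfl⟩
      obtain ⟨ρ, hρ⟩ := H.ex_tR_sL r.unop
      exact ⟨MulOpposite.op ρ, by simp [hρ]⟩
  mixed₁ := by
    intro M _ g g1 g2 g3 g4 g5 a
    simpa using (H.mixed₁ (M := M) (g := fun x y z => g (op z) (op y) (op x))
      (fun u u' v w => by simpa using g3 (op w) (op v) (op u) (op u'))
      (fun u v v' w => by simpa using g2 (op w) (op v) (op v') (op u))
      (fun u v w w' => by simpa using g1 (op w) (op w') (op v) (op u))
      (fun l u v w => by simpa using (g5 (op l) (op w) (op v) (op u)).symm)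
      (fun r u v w => by simpa using (g4 (op r) (op w) (op v) (op u)).symm)
      a.unop).symm
  mixed₂ := by
    intro M _ g g1 g2 g3 g4 g5 a
    simpa using (H.mixed₂ (M := M) (g := fun x y z => g (op z) (op y) (op x))
      (fun u u' v w => by simpa using g3 (op w) (op v) (op u) (op u'))
      (fun u v v' w => by simpa using g2 (op w) (op v) (op v') (op u))
      (fun u v w w' => by simpa using g1 (op w) (op w') (op v) (op u))
      (fun r u v w => by simpa using (g5 (op r) (op w) (op v) (op u)).symm)
      (fun l u v w => by simpa using (g4 (op l) (op w) (op v) (op u)).symm)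
      a.unop).symm
  S_add a b := by simp [H.S_add]
  S_leftinv a := by simp [H.S_leftinv]
  S_rightinv a := by simp [H.S_rightinv]
  S_twistL l l' a := by
    apply unop_injective
    simpa [mul_assoc] using H.S_twistR l.unop l'.unop a.unop
  S_twistR r r' a := by
    apply unop_injective
    simpa [mul_assoc] using H.S_twistL r.unop r'.unop a.unop
  antipode_L a := by
    apply unop_injective
    simpa using H.antipode_R a.unop
  antipode_R a := by
    apply unop_injective
    simpa using H.antipode_L a.unop

end HopfAlgebroidData
namespace HopfAlgebroidData

variable {A L R : Type u} [Ring A] [Ring L] [Ring R] (H : HopfAlgebroidData A L R)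

/-- `(Y)`: `tR (πR (S a)) = sL (πL a)`, by applying `(X)` to the opposite Hopf algebroid. -/
theorem tRpiR_S (a : A) : H.tR (H.πR (H.S a)) = H.sL (H.πL a) := by
  have h := H.opp.tLpiL_S (MulOpposite.op a)
  have h' := congrArg MulOpposite.unop h
  simpa [opp] using h'

theorem piR_tR_piR (y : A) : H.πR (H.tR (H.πR y)) = H.πR y := by
  have := H.πR_lunit' y 1
  simpa using this

/-- Direction (1): `Υ` right integral implies `S Υ` left integral. -/
theorem right_to_S_left (Υ : A) (hr : ∀ x, Υ * x = Υ * H.sR (H.πR x)) (a : A) :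
    a * H.S Υ = H.sL (H.πL a) * H.S Υ := by
  calc a * H.S Υ
      = (∑ i ∈ Finset.range (H.nR a), H.d1 a i * H.sR (H.πR (H.d2 a i))) * H.S Υ := by
        rw [H.counitR_left]
    _ = ∑ i ∈ Finset.range (H.nR a), H.d1 a i * H.sR (H.πR (H.d2 a i)) * H.S Υ :=
        Finset.sum_mul _ _ _
    _ = ∑ i ∈ Finset.range (H.nR a), H.d1 a i * (H.S (H.d2 a i) * H.S Υ) := by
        refine Finset.sum_congr rfl fun i _ => ?_
        have h5 : Υ * H.tR (H.πR (H.d2 a i)) = Υ * H.d2 a i := by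
          rw [hr (H.tR (H.πR (H.d2 a i))), hr (H.d2 a i), H.piR_tR_piR]
        calc H.d1 a i * H.sR (H.πR (H.d2 a i)) * H.S Υ
            = H.d1 a i * (H.sR (H.πR (H.d2 a i)) * H.S Υ) := mul_assoc _ _ _
          _ = H.d1 a i * H.S (Υ * H.tR (H.πR (H.d2 a i))) := by rw [H.S_tR_right]
          _ = H.d1 a i * H.S (Υ * H.d2 a i) := by rw [h5]
          _ = H.d1 a i * (H.S (H.d2 a i) * H.S Υ) := by rw [H.S_mul]
    _ = (∑ i ∈ Finset.range (H.nR a), H.d1 a i * H.S (H.d2 a i)) * H.S Υ := by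
        rw [Finset.sum_mul]
        exact Finset.sum_congr rfl fun i _ => (mul_assoc _ _ _).symm
    _ = H.sL (H.πL a) * H.S Υ := by rw [H.antipode_R]

/-- Direction (2): `Υ` right integral implies `S⁻¹ Υ` left integral. -/
theorem right_to_Sinv_left (Υ : A) (hr : ∀ x, Υ * x = Υ * H.sR (H.πR x)) (a : A) :
    a * H.Sinv Υ = H.sL (H.πL a) * H.Sinv Υ := by
  calc a * H.Sinv Υ
      = H.Sinv (Υ * H.S a) := by rw [H.Sinv_mul, H.S_leftinv]
    _ = H.Sinv (Υ * H.sR (H.πR (H.S a))) := by rw [← hr (H.S a)]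
    _ = H.tR (H.πR (H.S a)) * H.Sinv Υ := H.Sinv_sR_right _ _
    _ = H.sL (H.πL a) * H.Sinv Υ := by rw [H.tRpiR_S]

/-- Direction (3): `S Υ` left integral implies `Υ` right integral. -/
theorem S_left_to_right (Υ : A) (hl : ∀ a, a * H.S Υ = H.sL (H.πL a) * H.S Υ) (x : A) :
    Υ * x = Υ * H.sR (H.πR x) := by
  calc Υ * x
      = H.Sinv (H.S x * H.S Υ) := by rw [H.Sinv_mul, H.S_leftinv, H.S_leftinv]
    _ = H.Sinv (H.sL (H.πL (H.S x)) * H.S Υ) := by rw [hl (H.S x)]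
    _ = H.Sinv (H.S Υ) * H.tL (H.πL (H.S x)) := H.Sinv_sL_left _ _
    _ = Υ * H.sR (H.πR x) := by rw [H.S_leftinv, H.tLpiL_S]

/-- Direction (4): `S⁻¹ Υ` left integral implies `Υ` right integral. -/
theorem Sinv_left_to_right (Υ : A) (hl : ∀ a, a * H.Sinv Υ = H.sL (H.πL a) * H.Sinv Υ)
    (x : A) : Υ * x = Υ * H.sR (H.πR x) := by
  have key : H.S (H.sL (H.πL (H.Sinv x))) = H.sR (H.πR x) := by
    have h := H.tRpiR_S (H.Sinv x)
    rw [H.S_rightinv] at h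
    rw [← h, H.S_tR]
  calc Υ * x
      = H.S (H.Sinv x * H.Sinv Υ) := by rw [H.S_mul, H.S_rightinv, H.S_rightinv]
    _ = H.S (H.sL (H.πL (H.Sinv x)) * H.Sinv Υ) := by rw [hl (H.Sinv x)]
    _ = H.S (H.Sinv Υ) * H.S (H.sL (H.πL (H.Sinv x))) := H.S_mul _ _
    _ = Υ * H.sR (H.πR x) := by rw [H.S_rightinv, key]

end HopfAlgebroidData
/-- In a Hopf algebroid `(A_L, A_R, S)`, an element `Υ ∈ A` is a right
integral (`Υa = Υ s_R(π_R(a))` for all `a`) iff `S(Υ)` is a left integral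
(`a S(Υ) = s_L(π_L(a)) S(Υ)` for all `a`), and iff `S⁻¹(Υ)` is a left integral. -/
theorem right_integral_iff_antipode_left_integral
    {A L R : Type u} [Ring A] [Ring L] [Ring R]
    (H : HopfAlgebroidData A L R) (Υ : A) :
    ((∀ a, Υ * a = Υ * H.sR (H.πR a)) ↔
      (∀ a, a * H.S Υ = H.sL (H.πL a) * H.S Υ)) ∧
    ((∀ a, Υ * a = Υ * H.sR (H.πR a)) ↔
      (∀ a, a * H.Sinv Υ = H.sL (H.πL a) * H.Sinv Υ)) := by
  exact ⟨⟨fun hr a => H.right_to_S_left Υ hr a, fun hl x => H.S_left_to_right Υ hl x⟩,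
    ⟨fun hr a => H.right_to_Sinv_left Υ hr a, fun hl x => H.Sinv_left_to_right Υ hl x⟩⟩
end

section
/- In a Hopf algebroid, an element Υ ∈ A satisfies Υa = Υ s_R(π_R(a)) for all a ∈ A if and only if it satisfies Υa = Υ t_R(π_R(a)) for all a ∈ A. -/
universe u

/-- In a Hopf algebroid, `Υ ∈ A` satisfies `Υa = Υ s_R(π_R(a))` for all
`a ∈ A` iff it satisfies `Υa = Υ t_R(π_R(a))` for all `a ∈ A`. -/
theorem right_integral_sR_iff_tR
    {A L R : Type u} [Ring A] [Ring L] [Ring R]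
    (H : HopfAlgebroidData A L R) (Υ : A) :
    (∀ a, Υ * a = Υ * H.sR (H.πR a)) ↔ (∀ a, Υ * a = Υ * H.tR (H.πR a)) := by
  constructor
  · intro h a
    have key : H.πR (H.tR (H.πR a)) = H.πR a := by
      have := H.πR_lunit' a 1
      simpa using this
    calc Υ * a = Υ * H.sR (H.πR a) := h a
      _ = Υ * H.sR (H.πR (H.tR (H.πR a))) := by rw [key]
      _ = Υ * H.tR (H.πR a) := (h _).symm
  · intro h a
    have key : H.πR (H.sR (H.πR a)) = H.πR a := by
      have := H.πR_lunit a 1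
      simpa using this
    calc Υ * a = Υ * H.tR (H.πR a) := h a
      _ = Υ * H.tR (H.πR (H.sR (H.πR a))) := by rw [key]
      _ = Υ * H.sR (H.πR a) := (h _).symm
end
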